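/- arXiv:2209.04740 — 3 statements merged into one kernel-verified Lean document; each statement's English description precedes it below -/
import Mathlib

section
/- Let G be a simple graph with n vertices, where n is even, and with e edges. Then the number of 4-element subsets of V(G) that induce a subgraph isomorphic to K_{2,2} (the 4-cycle) is at most min{ C(n/2,2)^2, (e/4)·((n−2)^2/4) }. -/
set_option maxHeartbeats 2000000

open Finset

namespace K22Aux

variable {V : Type} [Fintype V] [DecidableEq V] (G : SimpleGraph V) [DecidableRel G.Adj]

/-- ordered 4-tuples (u,x,v,y) tracing an induced 4-cycle u-x-v-y. -/
def QF : Finset (V × V × V × V) :=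
  univ.filter (fun p => G.Adj p.1 p.2.1 ∧ G.Adj p.2.1 p.2.2.1 ∧ G.Adj p.2.2.1 p.2.2.2 ∧
    G.Adj p.2.2.2 p.1 ∧ ¬ G.Adj p.1 p.2.2.1 ∧ ¬ G.Adj p.2.1 p.2.2.2 ∧
    p.1 ≠ p.2.2.1 ∧ p.2.1 ≠ p.2.2.2)

/-- vertices adjacent to `x`, not adjacent to `u`, different from `u`. -/
def Af (u x : V) : Finset V := ((G.neighborFinset x).erase u) \ (G.neighborFinset u)

lemma mem_Af {u x w : V} : w ∈ Af G u x ↔ G.Adj x w ∧ w ≠ u ∧ ¬ G.Adj u w := by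
  simp [Af, SimpleGraph.mem_neighborFinset]; tauto

def SP (s : Finset V) : Prop := s.card = 4 ∧
    Nonempty (G.induce (s : Set V) ≃g completeBipartiteGraph (Fin 2) (Fin 2))

noncomputable instance : DecidablePred (SP G) := Classical.decPred _

noncomputable def SF : Finset (Finset V) := univ.filter (SP G)

lemma eight_le_fiber {s : Finset V} (hs : s ∈ SF G) :
    8 ≤ ((QF G).filter
      (fun p => ({p.1, p.2.1, p.2.2.1, p.2.2.2} : Finset V) = s)).card := by
  rw [SF, Finset.mem_filter] at hs
  obtain ⟨-, hc, ⟨e⟩⟩ := hs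
  set f : Fin 2 ⊕ Fin 2 → V := fun i => (e.symm i : V) with hf
  have key : ∀ i j, G.Adj (f i) (f j) ↔ (completeBipartiteGraph (Fin 2) (Fin 2)).Adj i j := by
    intro i j
    have h := e.symm.map_adj_iff (v := i) (w := j)
    simpa [SimpleGraph.comap_adj] using h
  have hinj : Function.Injective f := by
    intro i j h
    exact e.symm.injective (Subtype.ext h)
  have hmem : ∀ i, f i ∈ s := fun i => (e.symm i).2
  set u := f (Sum.inl 0) with hu
  set v := f (Sum.inl 1) with hv
  set x := f (Sum.inr 0) with hx
  set y := f (Sum.inr 1) with hy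
  have hux : G.Adj u x := (key _ _).2 (by simp)
  have huy : G.Adj u y := (key _ _).2 (by simp)
  have hvx : G.Adj v x := (key _ _).2 (by simp)
  have hvy : G.Adj v y := (key _ _).2 (by simp)
  have hnuv : ¬ G.Adj u v := fun h => by simpa using (key _ _).1 h
  have hnxy : ¬ G.Adj x y := fun h => by simpa using (key _ _).1 h
  have hnvu : ¬ G.Adj v u := fun h => hnuv h.symm
  have hnyx : ¬ G.Adj y x := fun h => hnxy h.symm
  have neuv : u ≠ v := fun h => by simpa using hinj h
  have nexy : x ≠ y := fun h => by simpa using hinj h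
  have neux : u ≠ x := hux.ne
  have neuy : u ≠ y := huy.ne
  have nevx : v ≠ x := hvx.ne
  have nevy : v ≠ y := hvy.ne
  have hxu := hux.symm; have hyu := huy.symm; have hxv := hvx.symm; have hyv := hvy.symm
  have hset : ({u, x, v, y} : Finset V) = s := by
    apply Finset.eq_of_subset_of_card_le
    · simp [Finset.insert_subset_iff, hmem, hu, hv, hx, hy]
    · rw [hc]
      have h4 : ({u, x, v, y} : Finset V).card = 4 := by
        rw [Finset.card_insert_of_notMem (by simp [neux, neuv, neuy]),
          Finset.card_insert_of_notMem (by simp [nevx.symm, nexy]),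
          Finset.card_insert_of_notMem (by simp [nevy]), Finset.card_singleton]
      omega
  set L : List (V × V × V × V) := [(u,x,v,y),(u,y,v,x),(v,x,u,y),(v,y,u,x),
    (x,u,y,v),(x,v,y,u),(y,u,x,v),(y,v,x,u)] with hL
  have hnodup : L.Nodup := by
    simp [hL, Prod.ext_iff, neuv, nexy, neux, neuy, nevx, nevy,
      neuv.symm, nexy.symm, neux.symm, neuy.symm, nevx.symm, nevy.symm]
  have hsub : L.toFinset ⊆ (QF G).filter
      (fun p => ({p.1, p.2.1, p.2.2.1, p.2.2.2} : Finset V) = s) := by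
    intro p hp
    rw [List.mem_toFinset, hL] at hp
    have hmemQF : ∀ q : V × V × V × V, (G.Adj q.1 q.2.1 ∧ G.Adj q.2.1 q.2.2.1 ∧
        G.Adj q.2.2.1 q.2.2.2 ∧ G.Adj q.2.2.2 q.1 ∧ ¬ G.Adj q.1 q.2.2.1 ∧
        ¬ G.Adj q.2.1 q.2.2.2 ∧ q.1 ≠ q.2.2.1 ∧ q.2.1 ≠ q.2.2.2) →
        ({q.1, q.2.1, q.2.2.1, q.2.2.2} : Finset V) = s → p = q → p ∈ (QF G).filter
        (fun p => ({p.1, p.2.1, p.2.2.1, p.2.2.2} : Finset V) = s) := by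
      rintro q h1 h2 rfl
      exact Finset.mem_filter.2 ⟨Finset.mem_filter.2 ⟨Finset.mem_univ _, h1⟩, h2⟩
    have hperm : ∀ a b c d : V, ({a,b,c,d} : Finset V) = ({u,x,v,y} : Finset V) →
        ({a,b,c,d} : Finset V) = s := fun a b c d h => h.trans hset
    simp only [List.mem_cons, List.not_mem_nil, or_false] at hp
    rcases hp with rfl | rfl | rfl | rfl | rfl | rfl | rfl | rfl
    · exact hmemQF _ ⟨hux, hxv, hvy, hyu, hnuv, hnxy, neuv, nexy⟩ hset rfl
    · exact hmemQF _ ⟨huy, hyv, hvx, hxu, hnuv, hnyx, neuv, nexy.symm⟩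
        (hperm _ _ _ _ (by ext a; simp; tauto)) rfl
    · exact hmemQF _ ⟨hvx, hxu, huy, hyv, hnvu, hnxy, neuv.symm, nexy⟩
        (hperm _ _ _ _ (by ext a; simp; tauto)) rfl
    · exact hmemQF _ ⟨hvy, hyu, hux, hxv, hnvu, hnyx, neuv.symm, nexy.symm⟩
        (hperm _ _ _ _ (by ext a; simp; tauto)) rfl
    · exact hmemQF _ ⟨hxu, huy, hyv, hvx, hnxy, hnuv, nexy, neuv⟩
        (hperm _ _ _ _ (by ext a; simp; tauto)) rfl
    · exact hmemQF _ ⟨hxv, hvy, hyu, hux, hnxy, hnvu, nexy, neuv.symm⟩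
        (hperm _ _ _ _ (by ext a; simp; tauto)) rfl
    · exact hmemQF _ ⟨hyu, hux, hxv, hvy, hnyx, hnuv, nexy.symm, neuv⟩
        (hperm _ _ _ _ (by ext a; simp; tauto)) rfl
    · exact hmemQF _ ⟨hyv, hvx, hxu, huy, hnyx, hnvu, nexy.symm, neuv.symm⟩
        (hperm _ _ _ _ (by ext a; simp; tauto)) rfl
  calc (8 : ℕ) = L.toFinset.card := by
        rw [List.toFinset_card_of_nodup hnodup]
        rfl
    _ ≤ _ := Finset.card_le_card hsub

lemma eight_mul_card_SF_le : 8 * (SF G).card ≤ (QF G).card := by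
  rw [Finset.card_eq_sum_card_fiberwise
    (f := fun p : V × V × V × V => ({p.1, p.2.1, p.2.2.1, p.2.2.2} : Finset V))
    (s := QF G) (t := univ) (fun p _ => Finset.mem_univ _)]
  calc 8 * (SF G).card = ∑ _s ∈ SF G, 8 := by
        rw [Finset.sum_const, smul_eq_mul, mul_comm]
    _ ≤ ∑ s ∈ SF G, ((QF G).filter
        (fun p => ({p.1, p.2.1, p.2.2.1, p.2.2.2} : Finset V) = s)).card :=
        Finset.sum_le_sum (fun s hs => eight_le_fiber G hs)
    _ ≤ _ := Finset.sum_le_sum_of_subset (Finset.subset_univ _)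

lemma card_QF_le :
    (QF G).card ≤ ∑ p ∈ (univ ×ˢ univ : Finset (V × V)),
      (if G.Adj p.1 p.2 then (Af G p.1 p.2).card * (Af G p.2 p.1).card else 0) := by
  rw [Finset.card_eq_sum_card_fiberwise
    (f := fun p : V × V × V × V => (p.1, p.2.1)) (t := univ ×ˢ univ) (fun x _ => by simp)]
  refine Finset.sum_le_sum fun b _ => ?_
  by_cases hadj : G.Adj b.1 b.2
  · rw [if_pos hadj]
    have : ((QF G).filter (fun a => (a.1, a.2.1) = b)).card ≤
        ((Af G b.1 b.2) ×ˢ (Af G b.2 b.1)).card := by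
      apply Finset.card_le_card_of_injOn (fun p => (p.2.2.1, p.2.2.2))
      · intro p hp
        simp only [Finset.mem_coe, QF, Finset.mem_filter, Finset.mem_univ, true_and, Prod.ext_iff] at hp
        obtain ⟨⟨h1, h2, h3, h4, h5, h6, h7, h8⟩, he1, he2⟩ := hp
        rw [← he1, ← he2]
        rw [Finset.mem_coe, Finset.mem_product, mem_Af, mem_Af]
        exact ⟨⟨h2, fun hh => h7 hh.symm, h5⟩, ⟨h4.symm, fun hh => h8 hh.symm, h6⟩⟩
      · intro p hp q hq hpq
        simp only [Finset.coe_filter, Set.mem_setOf_eq, Prod.ext_iff] at hp hq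
        obtain ⟨p1, p2, p3, p4⟩ := p
        obtain ⟨q1, q2, q3, q4⟩ := q
        simp only [Prod.ext_iff] at hpq ⊢
        simp_all
    simpa [Finset.card_product] using this
  · rw [if_neg hadj, Nat.le_zero, Finset.card_eq_zero, Finset.filter_eq_empty_iff]
    rintro p hp
    simp only [QF, Finset.mem_filter, Finset.mem_univ, true_and] at hp
    intro hb
    rw [Prod.ext_iff] at hb
    exact hadj (hb.1 ▸ hb.2 ▸ hp.1)

lemma Af_add_le {u x : V} (h : G.Adj u x) :
    (Af G u x).card + (Af G x u).card ≤ Fintype.card V - 2 := by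
  have hdisj : Disjoint (Af G u x) (Af G x u) := by
    rw [Finset.disjoint_left]
    intro w h1 h2
    rw [mem_Af] at h1 h2
    exact h1.2.2 h2.1
  have hsub : Af G u x ∪ Af G x u ⊆ univ \ {u, x} := by
    intro w hw
    rcases Finset.mem_union.1 hw with hw | hw <;> rw [mem_Af] at hw <;>
      simp only [Finset.mem_sdiff, Finset.mem_univ, Finset.mem_insert, Finset.mem_singleton,
        true_and] <;> push_neg
    · exact ⟨hw.2.1, hw.1.ne'⟩
    · exact ⟨hw.1.ne', hw.2.1⟩
  have := Finset.card_le_card hsub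
  rw [Finset.card_union_of_disjoint hdisj] at this
  have hcard : (univ \ {u, x} : Finset V).card = Fintype.card V - 2 := by
    rw [Finset.card_sdiff_of_subset (Finset.subset_univ _), Finset.card_univ,
      Finset.card_insert_of_notMem (by simp [h.ne]), Finset.card_singleton]
  omega

lemma sum_ite_const (c : ℕ) :
    ∑ p ∈ (univ ×ˢ univ : Finset (V × V)), (if G.Adj p.1 p.2 then c else 0)
      = 2 * G.edgeFinset.card * c := by
  rw [Finset.sum_product]
  have h1 : ∀ u : V, ∑ x : V, (if G.Adj u x then c else 0) = G.degree u * c := by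
    intro u
    rw [← Finset.sum_filter, Finset.sum_const, smul_eq_mul, SimpleGraph.degree,
      SimpleGraph.neighborFinset_eq_filter]
  simp only [h1]
  rw [← Finset.sum_mul, SimpleGraph.sum_degrees_eq_twice_card_edges]

lemma bound2_nat : 16 * (SF G).card ≤ G.edgeFinset.card * (Fintype.card V - 2) ^ 2 := by
  have hA := eight_mul_card_SF_le G
  have hB := card_QF_le G
  have hW : 4 * (∑ p ∈ (univ ×ˢ univ : Finset (V × V)),
      (if G.Adj p.1 p.2 then (Af G p.1 p.2).card * (Af G p.2 p.1).card else 0))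
      ≤ 2 * G.edgeFinset.card * (Fintype.card V - 2) ^ 2 := by
    rw [Finset.mul_sum, ← sum_ite_const G ((Fintype.card V - 2) ^ 2)]
    refine Finset.sum_le_sum fun p _ => ?_
    by_cases h : G.Adj p.1 p.2
    · rw [if_pos h, if_pos h]
      have h2 := Af_add_le G h
      have e1 : 4 * ((Af G p.1 p.2).card * (Af G p.2 p.1).card)
          ≤ ((Af G p.1 p.2).card + (Af G p.2 p.1).card) ^ 2 := by
        nlinarith [two_mul_le_add_sq (Af G p.1 p.2).card (Af G p.2 p.1).card]
      calc 4 * ((Af G p.1 p.2).card * (Af G p.2 p.1).card)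
          ≤ ((Af G p.1 p.2).card + (Af G p.2 p.1).card) ^ 2 := e1
        _ ≤ (Fintype.card V - 2) ^ 2 := Nat.pow_le_pow_left h2 2
    · simp [h]
  have h32 : 2 * (16 * (SF G).card) ≤ 2 * (G.edgeFinset.card * (Fintype.card V - 2) ^ 2) := by
    calc 2 * (16 * (SF G).card) = 4 * (8 * (SF G).card) := by ring
    _ ≤ 4 * (QF G).card := by omega
    _ ≤ 4 * (∑ p ∈ (univ ×ˢ univ : Finset (V × V)),
        (if G.Adj p.1 p.2 then (Af G p.1 p.2).card * (Af G p.2 p.1).card else 0)) := by omega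
    _ ≤ 2 * G.edgeFinset.card * (Fintype.card V - 2) ^ 2 := hW
    _ = 2 * (G.edgeFinset.card * (Fintype.card V - 2) ^ 2) := by ring
  exact Nat.le_of_mul_le_mul_left h32 two_pos

/-- triples (u,x,w) with u-x edge, x-w edge, u-w non-edge, u ≠ w -/
def RF : Finset (V × V × V) :=
  univ.filter (fun q => G.Adj q.1 q.2.1 ∧ G.Adj q.2.1 q.2.2 ∧ q.2.2 ≠ q.1 ∧ ¬ G.Adj q.1 q.2.2)

lemma sum_Af_le_card_RF :
    ∑ p ∈ (univ ×ˢ univ : Finset (V × V)),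
      (if G.Adj p.1 p.2 then (Af G p.1 p.2).card else 0) ≤ (RF G).card := by
  rw [Finset.card_eq_sum_card_fiberwise
    (f := fun q : V × V × V => (q.1, q.2.1)) (t := univ ×ˢ univ) (fun x _ => by simp)]
  refine Finset.sum_le_sum fun b _ => ?_
  by_cases h : G.Adj b.1 b.2
  · rw [if_pos h]
    apply Finset.card_le_card_of_injOn (fun w => (b.1, b.2, w))
    · intro w hw
      rw [Finset.mem_coe, mem_Af] at hw
      simp only [Finset.mem_coe, RF, Finset.mem_filter, Finset.mem_univ, true_and]
      exact ⟨⟨h, hw.1, hw.2.1, hw.2.2⟩, trivial⟩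
    · intro w _ w' _ hww
      simpa using hww
  · rw [if_neg h]
    exact Nat.zero_le _

lemma card_RF_le :
    (RF G).card ≤ ∑ w : V, (Fintype.card V - 1 - G.degree w) * G.degree w := by
  rw [Finset.card_eq_sum_card_fiberwise
    (f := fun q : V × V × V => q.2.2) (t := univ) (fun x _ => by simp)]
  refine Finset.sum_le_sum fun w _ => ?_
  have : ((RF G).filter (fun q => q.2.2 = w)).card ≤
      (((univ \ G.neighborFinset w).erase w) ×ˢ (G.neighborFinset w)).card := by
    apply Finset.card_le_card_of_injOn (fun q => (q.1, q.2.1))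
    · intro q hq
      simp only [Finset.mem_coe, RF, Finset.mem_filter, Finset.mem_univ, true_and] at hq
      obtain ⟨⟨h1, h2, h3, h4⟩, h5⟩ := hq
      rw [Finset.mem_coe, Finset.mem_product, Finset.mem_erase, Finset.mem_sdiff]
      subst h5
      refine ⟨⟨fun hh => h3 hh.symm, Finset.mem_univ _, ?_⟩, ?_⟩
      · rw [SimpleGraph.mem_neighborFinset]
        exact fun hh => h4 hh.symm
      · rw [SimpleGraph.mem_neighborFinset]
        exact h2.symm
    · intro q hq q' hq' hqq
      simp only [Finset.coe_filter, Set.mem_setOf_eq] at hq hq'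
      obtain ⟨q1, q2, q3⟩ := q
      obtain ⟨q1', q2', q3'⟩ := q'
      simp only [Prod.ext_iff] at hqq ⊢
      simp_all
  refine this.trans ?_
  rw [Finset.card_product, Finset.card_erase_of_mem (by simp [Finset.mem_sdiff]),
    Finset.card_sdiff_of_subset (Finset.subset_univ _), Finset.card_univ]
  have hdeg : G.degree w = (G.neighborFinset w).card := rfl
  rw [hdeg]
  exact Nat.mul_le_mul_right _ (by omega)

lemma deg_bound (hV : Even (Fintype.card V)) (w : V) :
    4 * ((Fintype.card V - 1 - G.degree w) * G.degree w)
      ≤ Fintype.card V * (Fintype.card V - 2) := by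
  obtain ⟨k, hk⟩ := hV
  have hd : G.degree w < Fintype.card V := G.degree_lt_card_verts w
  set n := Fintype.card V
  set d := G.degree w
  have h1 : (0:ℤ) ≤ ((d:ℤ) - k) * ((d:ℤ) - k + 1) := by
    rcases le_or_gt (k:ℤ) (d:ℤ) with h | h
    · exact mul_nonneg (by omega) (by omega)
    · calc (0:ℤ) ≤ ((k:ℤ) - d) * ((k:ℤ) - d - 1) := mul_nonneg (by omega) (by omega)
        _ = ((d:ℤ) - k) * ((d:ℤ) - k + 1) := by ring
  have hn : n = 2 * k := by omega
  have hn2 : 2 ≤ n := by omega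
  zify [show d ≤ n - 1 by omega, hn2, show 1 ≤ n by omega]
  have hnz : (n:ℤ) = 2 * (k:ℤ) := by exact_mod_cast hn
  nlinarith [h1, hnz]

lemma sum_sym :
    ∑ p ∈ (univ ×ˢ univ : Finset (V × V)),
      (if G.Adj p.1 p.2 then ((Af G p.1 p.2).card + (Af G p.2 p.1).card) else 0)
    = 2 * ∑ p ∈ (univ ×ˢ univ : Finset (V × V)),
      (if G.Adj p.1 p.2 then (Af G p.1 p.2).card else 0) := by
  have hsplit : ∀ p : V × V,
      (if G.Adj p.1 p.2 then ((Af G p.1 p.2).card + (Af G p.2 p.1).card) else 0)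
      = (if G.Adj p.1 p.2 then (Af G p.1 p.2).card else 0)
        + (if G.Adj p.1 p.2 then (Af G p.2 p.1).card else 0) := fun p => by
    split <;> simp
  rw [Finset.sum_congr rfl (fun p _ => hsplit p), Finset.sum_add_distrib, two_mul]
  congr 1
  refine Finset.sum_equiv (Equiv.prodComm V V) (by simp) ?_
  intro p _
  simp only [Equiv.prodComm_apply, Prod.fst_swap, Prod.snd_swap]
  by_cases h : G.Adj p.1 p.2
  · rw [if_pos h]; exact (if_pos h.symm).symm
  · rw [if_neg h]; exact (if_neg (fun hh : G.Adj p.2 p.1 => h hh.symm)).symm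

lemma bound1_nat (hV : Even (Fintype.card V)) :
    64 * (SF G).card ≤ (Fintype.card V) ^ 2 * (Fintype.card V - 2) ^ 2 := by
  have hA := eight_mul_card_SF_le G
  have hB := card_QF_le G
  have hSA := sum_Af_le_card_RF G
  have hRF := card_RF_le G
  set n := Fintype.card V with hn
  set W := ∑ p ∈ (univ ×ˢ univ : Finset (V × V)),
      (if G.Adj p.1 p.2 then (Af G p.1 p.2).card * (Af G p.2 p.1).card else 0) with hWdef
  set SA := ∑ p ∈ (univ ×ˢ univ : Finset (V × V)),
      (if G.Adj p.1 p.2 then (Af G p.1 p.2).card else 0) with hSAdef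
  have hW4 : 4 * W ≤ (n - 2) * (2 * SA) := by
    rw [← sum_sym G, hWdef, Finset.mul_sum]
    have : ∀ p ∈ (univ ×ˢ univ : Finset (V × V)),
        4 * (if G.Adj p.1 p.2 then (Af G p.1 p.2).card * (Af G p.2 p.1).card else 0)
        ≤ (n - 2) * (if G.Adj p.1 p.2 then ((Af G p.1 p.2).card + (Af G p.2 p.1).card) else 0) := by
      intro p _
      by_cases h : G.Adj p.1 p.2
      · rw [if_pos h, if_pos h]
        have h2 := Af_add_le G h
        have e1 : 4 * ((Af G p.1 p.2).card * (Af G p.2 p.1).card)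
            ≤ ((Af G p.1 p.2).card + (Af G p.2 p.1).card)
              * ((Af G p.1 p.2).card + (Af G p.2 p.1).card) := by
          nlinarith [two_mul_le_add_sq (Af G p.1 p.2).card (Af G p.2 p.1).card]
        exact e1.trans (Nat.mul_le_mul_right _ h2)
      · simp [h]
    calc ∑ p ∈ (univ ×ˢ univ : Finset (V × V)),
        4 * (if G.Adj p.1 p.2 then (Af G p.1 p.2).card * (Af G p.2 p.1).card else 0)
        ≤ ∑ p ∈ (univ ×ˢ univ : Finset (V × V)),
          (n - 2) * (if G.Adj p.1 p.2 then ((Af G p.1 p.2).card + (Af G p.2 p.1).card) else 0) :=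
        Finset.sum_le_sum this
      _ = (n - 2) * ∑ p ∈ (univ ×ˢ univ : Finset (V × V)),
          (if G.Adj p.1 p.2 then ((Af G p.1 p.2).card + (Af G p.2 p.1).card) else 0) := by
        rw [Finset.mul_sum]
  have hR4 : 4 * (RF G).card ≤ n * (n * (n - 2)) := by
    calc 4 * (RF G).card ≤ 4 * ∑ w : V, (n - 1 - G.degree w) * G.degree w :=
        Nat.mul_le_mul_left _ hRF
      _ = ∑ w : V, 4 * ((n - 1 - G.degree w) * G.degree w) := by rw [Finset.mul_sum]
      _ ≤ ∑ _w : V, n * (n - 2) := Finset.sum_le_sum (fun w _ => deg_bound G hV w)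
      _ = n * (n * (n - 2)) := by rw [Finset.sum_const, Finset.card_univ, smul_eq_mul, ← hn]
  -- chain everything
  have key : 2 * (64 * (SF G).card) ≤ 2 * (n ^ 2 * (n - 2) ^ 2) := by
    calc 2 * (64 * (SF G).card) = 16 * (8 * (SF G).card) := by ring
      _ ≤ 16 * W := by
        have : (8 : ℕ) * (SF G).card ≤ W := hA.trans hB
        exact Nat.mul_le_mul_left _ this
      _ = 4 * (4 * W) := by ring
      _ ≤ 4 * ((n - 2) * (2 * SA)) := Nat.mul_le_mul_left _ hW4
      _ ≤ 4 * ((n - 2) * (2 * (RF G).card)) := by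
        have : 2 * SA ≤ 2 * (RF G).card := Nat.mul_le_mul_left _ hSA
        exact Nat.mul_le_mul_left _ (Nat.mul_le_mul_left _ this)
      _ = (n - 2) * 2 * (4 * (RF G).card) := by ring
      _ ≤ (n - 2) * 2 * (n * (n * (n - 2))) := Nat.mul_le_mul_left _ hR4
      _ = 2 * (n ^ 2 * (n - 2) ^ 2) := by ring
  exact Nat.le_of_mul_le_mul_left key two_pos

end K22Aux

/-- A graph with `n` vertices (`n` even) and `e` edges has at most
`min{C(n/2,2)², (e/4)·((n−2)²/4)}` induced copies of `K_{2,2}`. -/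
theorem count_induced_K22_le {V : Type} [Fintype V] (G : SimpleGraph V)
    (hV : Even (Fintype.card V)) :
    (Nat.card {s : Finset V // s.card = 4 ∧
        Nonempty (G.induce (s : Set V) ≃g completeBipartiteGraph (Fin 2) (Fin 2))} : ℝ) ≤
      min ((((Fintype.card V / 2 : ℕ).choose 2 : ℕ) : ℝ) ^ 2)
        ((Nat.card G.edgeSet : ℝ) / 4 * (((Fintype.card V : ℝ) - 2) ^ 2 / 4)) := by
  classical
  have hcount : Nat.card {s : Finset V // s.card = 4 ∧
      Nonempty (G.induce (s : Set V) ≃g completeBipartiteGraph (Fin 2) (Fin 2))}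
      = (K22Aux.SF G).card := by
    rw [Nat.card_eq_fintype_card, Fintype.card_subtype, K22Aux.SF]
    congr 1
    exact Finset.filter_congr (fun s _ => Iff.rfl)
  rw [le_min_iff]
  constructor
  · -- first bound
    obtain ⟨k, hk⟩ := hV
    have hdiv : Fintype.card V / 2 = k := by omega
    have h2C : 2 * (k.choose 2) = k * (k - 1) := by
      rw [Nat.choose_two_right]
      exact Nat.mul_div_cancel' (Nat.even_mul_pred_self k).two_dvd
    have hC : (Fintype.card V) ^ 2 * (Fintype.card V - 2) ^ 2 = 64 * (k.choose 2) ^ 2 := by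
      have e1 : Fintype.card V = 2 * k := by omega
      rcases Nat.eq_zero_or_pos k with rfl | hkpos
      · simp [e1]
      · have e2 : Fintype.card V - 2 = 2 * (k - 1) := by omega
        rw [e2, e1]
        have h64 : 64 * (k.choose 2) ^ 2 = 16 * (2 * k.choose 2) ^ 2 := by ring
        rw [h64, h2C]
        ring
    have hle : (K22Aux.SF G).card ≤ (k.choose 2) ^ 2 := by
      have hb := K22Aux.bound1_nat G ⟨k, hk⟩
      rw [hC] at hb
      exact Nat.le_of_mul_le_mul_left hb (by norm_num)
    rw [hcount, hdiv]
    exact_mod_cast hle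
  · -- second bound
    have h2 := K22Aux.bound2_nat G
    have hE : Nat.card G.edgeSet = G.edgeFinset.card := by
      rw [Nat.card_eq_fintype_card, SimpleGraph.edgeFinset_card]
    rcases le_or_gt 2 (Fintype.card V) with hn2 | hn2
    · have hcast : ((Fintype.card V : ℝ) - 2) = ((Fintype.card V - 2 : ℕ) : ℝ) := by
        rw [Nat.cast_sub hn2]
        norm_num
      rw [hcount, hcast, hE]
      have h16 : (16 : ℝ) * (K22Aux.SF G).card
          ≤ (G.edgeFinset.card : ℝ) * ((Fintype.card V - 2 : ℕ) : ℝ) ^ 2 := by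
        exact_mod_cast h2
      linarith
    · have hn0 : Fintype.card V = 0 := by
        rcases hV with ⟨k, hk⟩
        omega
      have hSF0 : (K22Aux.SF G).card = 0 := by
        have hb := K22Aux.bound1_nat G hV
        rw [hn0] at hb
        simpa using hb
      rw [hcount, hSF0]
      norm_num
      positivity
end

section
/- If n is an even positive integer and x, y, z are nonnegative integers with x + y + z = n, then C(x,2)·C(y,2) + C(x,2)·C(z,2) + C(y,2)·C(z,2) ≤ C(n/2,2)^2, and this maximum value C(n/2,2)^2 is attained (e.g., when x = y = n/2 and z = 0). -/
lemma key_int (x y z m : ℤ) (hz : 0 ≤ z) (hzy : z ≤ y) (hyx : y ≤ x)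
    (hs : x + y + z = 2 * m) :
    x*(x-1)*(y*(y-1)) + x*(x-1)*(z*(z-1)) + y*(y-1)*(z*(z-1)) ≤ (m*(m-1))^2 := by
  have hy : 0 ≤ y := hz.trans hzy
  have hx : 0 ≤ x := hy.trans hyx
  have h1 : y*(y-1)*(z*(z-1)) ≤ 2*(x*(x-1))*y*z := by
    rcases eq_or_lt_of_le hz with h0 | h0
    · rw [← h0]; nlinarith [mul_nonneg hy (mul_nonneg hy hy)]
    · have hz1 : 1 ≤ z := h0
      have hy1 : 1 ≤ y := hz1.trans hzy
      have hx1 : 1 ≤ x := hy1.trans hyx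
      have h3 : (y-1)*(z-1) ≤ x*(x-1) := by nlinarith
      have h4 : 0 ≤ y * z := mul_nonneg hy hz
      nlinarith [mul_le_mul_of_nonneg_left h3 h4, mul_nonneg hx (by linarith : (0:ℤ) ≤ x - 1)]
  have hle2m : x ≤ 2*m := by linarith
  have ha : 0 ≤ m^2 - (x-m)^2 := by nlinarith
  have hid : x*(x-1)*((y+z)*((y+z)-1)) = (m^2-(x-m)^2)*((m-1)^2-(x-m)^2) := by
    have hyz : y + z = 2*m - x := by linarith
    rw [hyz]; ring
  have h2 : x*(x-1)*((y+z)*((y+z)-1)) ≤ (m*(m-1))^2 := by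
    rw [hid]
    rcases le_or_gt ((x-m)^2) ((m-1)^2) with h | h
    · have := mul_le_mul (by nlinarith [sq_nonneg (x-m)] : m^2-(x-m)^2 ≤ m^2)
        (by nlinarith [sq_nonneg (x-m)] : (m-1)^2-(x-m)^2 ≤ (m-1)^2) (by linarith) (sq_nonneg m)
      nlinarith [this]
    · have : (m^2-(x-m)^2)*((m-1)^2-(x-m)^2) ≤ 0 :=
        mul_nonpos_of_nonneg_of_nonpos ha (by linarith)
      nlinarith [sq_nonneg (m*(m-1))]
  have hstep : x*(x-1)*(y*(y-1)) + x*(x-1)*(z*(z-1)) + y*(y-1)*(z*(z-1)) ≤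
      x*(x-1)*((y+z)*((y+z)-1)) := by nlinarith [h1]
  linarith [hstep, h2]

lemma key_int' (x y z m : ℤ) (hx : 0 ≤ x) (hy : 0 ≤ y) (hz : 0 ≤ z)
    (hs : x + y + z = 2 * m) :
    x*(x-1)*(y*(y-1)) + x*(x-1)*(z*(z-1)) + y*(y-1)*(z*(z-1)) ≤ (m*(m-1))^2 := by
  rcases le_total x y with h1 | h1 <;> rcases le_total y z with h2 | h2 <;>
    rcases le_total x z with h3 | h3
  · linarith [key_int z y x m hx h1 h2 (by linarith)]
  · linarith [key_int z y x m hx h1 h2 (by linarith)]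
  · linarith [key_int y z x m hx h3 (by linarith) (by linarith)]
  · linarith [key_int y x z m hz h3 h1 (by linarith)]
  · linarith [key_int z x y m hy h1 h3 (by linarith)]
  · linarith [key_int x z y m hy h2 h3 (by linarith)]
  · linarith [key_int x y z m hz h2 h1 (by linarith)]
  · linarith [key_int x y z m hz h2 h1 (by linarith)]

lemma two_mul_choose_two (x : ℕ) : 2 * x.choose 2 = x * (x - 1) := by
  cases x with
  | zero => simp
  | succ k =>
    have hev : Even ((k+1)*k) := by rw [mul_comm]; exact Nat.even_mul_succ_self k
    rw [Nat.choose_two_right, Nat.succ_sub_one, Nat.mul_div_cancel' hev.two_dvd]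

lemma choose_two_int (x : ℕ) : 2 * (x.choose 2 : ℤ) = x * (x - 1) := by
  cases x with
  | zero => simp
  | succ k =>
    have h := two_mul_choose_two (k+1)
    rw [Nat.succ_sub_one] at h
    have h' : ((2 * (k+1).choose 2 : ℕ) : ℤ) = (((k+1) * k : ℕ) : ℤ) := congrArg (fun t : ℕ => (t : ℤ)) h
    push_cast at h'
    push_cast
    linarith

/-- For an even positive integer `n`, among nonnegative integers `x, y, z` with
`x + y + z = n`, the quantity `C(x,2)C(y,2) + C(x,2)C(z,2) + C(y,2)C(z,2)` is at most
`C(n/2,2)²`, and this maximum value is attained. -/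
theorem max_sum_products_choose_two (n : ℕ) (hn : Even n) (hpos : 0 < n) :
    (∀ x y z : ℕ, x + y + z = n →
      x.choose 2 * y.choose 2 + x.choose 2 * z.choose 2 + y.choose 2 * z.choose 2 ≤
        (n / 2).choose 2 ^ 2) ∧
    (∃ x y z : ℕ, x + y + z = n ∧
      x.choose 2 * y.choose 2 + x.choose 2 * z.choose 2 + y.choose 2 * z.choose 2 =
        (n / 2).choose 2 ^ 2) := by
  obtain ⟨k, hk⟩ := hn
  have hn2 : n = 2 * (n / 2) := by omega
  set m := n / 2 with hm
  constructor
  · intro x y z hxyz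
    have hsum : (x : ℤ) + y + z = 2 * m := by
      have : x + y + z = 2 * m := by omega
      exact_mod_cast this
    have key := key_int' (x : ℤ) y z m (by positivity) (by positivity) (by positivity) hsum
    have ex := choose_two_int x
    have ey := choose_two_int y
    have ez := choose_two_int z
    have em := choose_two_int m
    have hgoal : (x.choose 2 * y.choose 2 + x.choose 2 * z.choose 2 + y.choose 2 * z.choose 2 : ℤ)
        ≤ ((m.choose 2 : ℤ)) ^ 2 := by
      have h4 : 4 * ((x.choose 2 : ℤ) * y.choose 2 + x.choose 2 * z.choose 2 + y.choose 2 * z.choose 2)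
          = (2*(x.choose 2:ℤ))*(2*(y.choose 2:ℤ)) + (2*(x.choose 2:ℤ))*(2*(z.choose 2:ℤ))
            + (2*(y.choose 2:ℤ))*(2*(z.choose 2:ℤ)) := by ring
      rw [ex, ey, ez] at h4
      have h5 : 4 * ((m.choose 2 : ℤ))^2 = (2*(m.choose 2:ℤ))^2 := by ring
      rw [em] at h5
      nlinarith [key, h4, h5]
    exact_mod_cast hgoal
  · exact ⟨m, m, 0, by omega, by simp [sq]⟩
end

section
/- Let W_10 ⊆ {0,1}^3 be the configuration W_10 = {(0,0,0),(0,0,1),(1,1,1)} in Q_3 (an edge of Q_3 together with the vertex antipodal to one of its endpoints). Then λ(W_10,3) ≥ 5/12. -/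
open Filter

namespace CubeDensity

/-- The automorphism of `Q_d` given by permuting coordinates by `σ` and then
complementing the values in the coordinates where `ε` is `true`. -/
def autMap (d : ℕ) (σ : Equiv.Perm (Fin d)) (ε : Fin d → Bool) (v : Fin d → Bool) :
    Fin d → Bool :=
  fun i => xor (v (σ⁻¹ i)) (ε i)

/-- `K` is an exact copy of `H` in `Q_d`: some automorphism of `Q_d` maps `H` onto `K`. -/
def ExactCopy (d : ℕ) (H K : Set (Fin d → Bool)) : Prop :=
  ∃ σ : Equiv.Perm (Fin d), ∃ ε : Fin d → Bool, autMap d σ ε '' H = K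

/-- The vertex of `Q_n` in the sub-`d`-cube with flip coordinates `F` (and fixed values `g`
outside `F`) corresponding to the vertex `u` of `Q_d`, identifying the flip coordinates
with `Fin d` in increasing order. -/
def embed {n d : ℕ} (F : Finset (Fin n)) (hF : F.card = d) (g : Fin n → Bool)
    (u : Fin d → Bool) : Fin n → Bool :=
  fun i => if h : i ∈ F then u ((F.orderIsoOfFin hF).symm ⟨i, h⟩) else g i

/-- The sub-`d`-cube of `Q_n` with flip coordinates `F` and fixed values `g` outside `F`
is `H`-good for `S`: the configuration induced by `S` on it is an exact copy of `H`. -/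
def IsGood {n d : ℕ} (H : Set (Fin d → Bool)) (S : Set (Fin n → Bool))
    (F : Finset (Fin n)) (hF : F.card = d) (g : Fin n → Bool) : Prop :=
  ExactCopy d H {u : Fin d → Bool | embed F hF g u ∈ S}

/-- The number of `H`-good sub-`d`-cubes of `Q_n`, where a sub-`d`-cube is encoded as a
pair `(F, g)` with `F` the `d`-element set of flip coordinates and `g` the fixed values
outside `F` (normalized to be `false` on `F`). -/
noncomputable def goodCount (d : ℕ) (H : Set (Fin d → Bool)) (n : ℕ)
    (S : Set (Fin n → Bool)) : ℕ :=
  Nat.card {p : Finset (Fin n) × (Fin n → Bool) //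
    ∃ hF : p.1.card = d, (∀ i ∈ p.1, p.2 i = false) ∧ IsGood H S p.1 hF p.2}

/-- `g(H,d,n,S)`: the fraction of the `C(n,d) * 2^(n-d)` sub-`d`-cubes of `Q_n` that are
`H`-good for `S`. -/
noncomputable def gFrac (d : ℕ) (H : Set (Fin d → Bool)) (n : ℕ)
    (S : Set (Fin n → Bool)) : ℝ :=
  (goodCount d H n S : ℝ) / ((n.choose d : ℝ) * 2 ^ (n - d))

/-- `ex(H,d,n)`: the maximum over all `S ⊆ {0,1}^n` of the fraction of `H`-good
sub-`d`-cubes. -/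
noncomputable def exD (d : ℕ) (H : Set (Fin d → Bool)) (n : ℕ) : ℝ :=
  ⨆ S : Set (Fin n → Bool), gFrac d H n S

end CubeDensity

namespace CubeDensity

/-! ### General lemmas about automorphisms and exact copies -/

lemma autMap_comp {d : ℕ} (σ' σ : Equiv.Perm (Fin d)) (ε' ε : Fin d → Bool)
    (v : Fin d → Bool) :
    autMap d σ' ε' (autMap d σ ε v) =
      autMap d (σ' * σ) (fun i => xor (ε (σ'⁻¹ i)) (ε' i)) v := by
  funext i
  simp [autMap, mul_inv_rev, Equiv.Perm.mul_apply, Bool.xor_assoc]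

lemma ExactCopy.image {d : ℕ} {H K : Set (Fin d → Bool)} (h : ExactCopy d H K)
    (σ : Equiv.Perm (Fin d)) (ε : Fin d → Bool) :
    ExactCopy d H (autMap d σ ε '' K) := by
  obtain ⟨σ0, ε0, him⟩ := h
  refine ⟨σ * σ0, fun i => xor (ε0 (σ⁻¹ i)) (ε i), ?_⟩
  rw [← him, ← Set.image_comp]
  refine congrArg₂ _ (funext fun v => ?_) rfl
  exact (autMap_comp σ σ0 ε ε0 v).symm

lemma autMap_one_apply {d : ℕ} (r v : Fin d → Bool) :
    autMap d 1 r v = fun i => xor (v i) (r i) := by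
  funext i; simp [autMap]

lemma autMap_one_invol {d : ℕ} (r v : Fin d → Bool) :
    autMap d 1 r (autMap d 1 r v) = v := by
  funext i; simp [autMap]

lemma image_autMap_one {d : ℕ} (r : Fin d → Bool) (T : Set (Fin d → Bool)) :
    autMap d 1 r '' T = {u | autMap d 1 r u ∈ T} := by
  ext u
  constructor
  · rintro ⟨t, ht, rfl⟩
    simpa [autMap_one_invol] using ht
  · intro hu
    exact ⟨autMap d 1 r u, hu, autMap_one_invol r u⟩

/-! ### `orderIsoOfFin` transfer lemmas -/

lemma orderIsoOfFin_apply_eq {α : Type*} [LinearOrder α] {s : Finset α} {k : ℕ}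
    (hs : s.card = k) {f : Fin k → α} (hmono : StrictMono f) (hmem : ∀ x, f x ∈ s)
    (i : Fin k) : ((s.orderIsoOfFin hs) i : α) = f i := by
  rw [Finset.coe_orderIsoOfFin_apply]
  exact (congrFun (Finset.orderEmbOfFin_unique hs hmem hmono) i).symm

lemma orderIsoOfFin_symm_apply_eq {α : Type*} [LinearOrder α] {s : Finset α} {k : ℕ}
    (hs : s.card = k) {f : Fin k → α} (hmono : StrictMono f) (hmem : ∀ x, f x ∈ s)
    (i : Fin k) (h : f i ∈ s) : (s.orderIsoOfFin hs).symm ⟨f i, h⟩ = i := by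
  have h1 : (s.orderIsoOfFin hs) i = ⟨f i, h⟩ :=
    Subtype.ext (orderIsoOfFin_apply_eq hs hmono hmem i)
  rw [← h1, OrderIso.symm_apply_apply]

/-! ### Generic bounds on `gFrac` and `exD` -/

lemma goodCount_le (d : ℕ) (H : Set (Fin d → Bool)) (n : ℕ) (S : Set (Fin n → Bool)) :
    goodCount d H n S ≤ 2 ^ n * 2 ^ n := by
  have h1 : goodCount d H n S ≤ Nat.card (Finset (Fin n) × (Fin n → Bool)) :=
    Nat.card_le_card_of_injective _ Subtype.val_injective
  refine h1.trans_eq ?_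
  rw [Nat.card_eq_fintype_card, Fintype.card_prod, Fintype.card_finset, Fintype.card_fin,
    Fintype.card_fun, Fintype.card_bool, Fintype.card_fin]

lemma gFrac_nonneg (d : ℕ) (H : Set (Fin d → Bool)) (n : ℕ) (S : Set (Fin n → Bool)) :
    0 ≤ gFrac d H n S :=
  div_nonneg (Nat.cast_nonneg _) (by positivity)

lemma gFrac_le_bound (d : ℕ) (H : Set (Fin d → Bool)) (n : ℕ) (S : Set (Fin n → Bool)) :
    gFrac d H n S ≤ ((2 ^ n * 2 ^ n : ℕ) : ℝ) := by
  unfold gFrac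
  rcases eq_or_lt_of_le
      (show (0:ℝ) ≤ (n.choose d : ℝ) * 2 ^ (n - d) by positivity) with h | h
  · rw [← h, div_zero]
    positivity
  · rw [div_le_iff₀ h]
    have h2 : (1:ℝ) ≤ (n.choose d : ℝ) * 2 ^ (n - d) := by
      have hc : 1 ≤ n.choose d := by
        by_contra hc
        push_neg at hc
        interval_cases hcd : n.choose d
        · simp [hcd] at h
      have : (1:ℝ) ≤ (n.choose d : ℝ) := by exact_mod_cast hc
      nlinarith [one_le_pow₀ (show (1:ℝ) ≤ 2 by norm_num) (n := n - d)]
    calc (goodCount d H n S : ℝ) ≤ ((2 ^ n * 2 ^ n : ℕ) : ℝ) := by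
          exact_mod_cast goodCount_le d H n S
      _ = ((2 ^ n * 2 ^ n : ℕ) : ℝ) * 1 := by ring
      _ ≤ ((2 ^ n * 2 ^ n : ℕ) : ℝ) * ((n.choose d : ℝ) * 2 ^ (n - d)) := by
          apply mul_le_mul_of_nonneg_left h2 (by positivity)

lemma bddAbove_gFrac (d : ℕ) (H : Set (Fin d → Bool)) (n : ℕ) :
    BddAbove (Set.range (gFrac d H n)) := by
  refine ⟨((2 ^ n * 2 ^ n : ℕ) : ℝ), ?_⟩
  rintro x ⟨S, rfl⟩
  exact gFrac_le_bound d H n S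

lemma gFrac_le_exD (d : ℕ) (H : Set (Fin d → Bool)) (n : ℕ) (S : Set (Fin n → Bool)) :
    gFrac d H n S ≤ exD d H n :=
  le_ciSup (bddAbove_gFrac d H n) S

lemma exD_nonneg (d : ℕ) (H : Set (Fin d → Bool)) (n : ℕ) : 0 ≤ exD d H n :=
  le_trans (gFrac_nonneg d H n ∅) (gFrac_le_exD d H n ∅)


end CubeDensity

/-! ### The blow-up construction in `Q_{6(m'+1)}` -/

namespace W10
open CubeDensity

def tb (b : Bool) : ZMod 2 := if b then 1 else 0
def zb (z : ZMod 2) : Bool := decide (z = 1)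

lemma zb_tb : ∀ b : Bool, zb (tb b) = b := by decide
lemma tb_zb : ∀ z : ZMod 2, tb (zb z) = z := by decide
lemma tb_inj : ∀ b b' : Bool, tb b = tb b' → b = b' := by decide
lemma zb_add_tb : ∀ b c : Bool, zb (tb b + tb c) = xor b c := by decide
lemma zmod2_cancel : ∀ x y : ZMod 2, x + (y + x) = y := by decide

def A6L : List (Fin 6 → Bool) :=
  [![false, false, false, false, false, false],
   ![false, false, false, false, true, true],
   ![false, false, false, true, true, true],
   ![false, false, true, false, false, false],
   ![false, false, true, true, false, true],
   ![false, false, true, true, true, false],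
   ![false, true, false, false, false, true],
   ![false, true, false, true, false, false],
   ![false, true, false, true, true, false],
   ![false, true, true, false, true, false],
   ![false, true, true, false, true, true],
   ![false, true, true, true, false, true],
   ![true, false, false, false, true, false],
   ![true, false, false, true, false, false],
   ![true, false, false, true, false, true],
   ![true, false, true, false, false, true],
   ![true, false, true, false, true, true],
   ![true, false, true, true, true, false],
   ![true, true, false, false, false, true],
   ![true, true, false, false, true, false],
   ![true, true, false, true, true, true],
   ![true, true, true, false, false, false],
   ![true, true, true, true, false, false],
   ![true, true, true, true, true, true]]

abbrev Tup : Type := (Fin 3 → Fin 6) × (Fin 6 → Bool) × (Fin 3 → Fin 3) × (Fin 3 → Fin 3) × (Fin 3 → Bool)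

def G5L : List Tup :=
  [(![(0 : Fin 6), (1 : Fin 6), (2 : Fin 6)], ![false, false, false, false, false, false], ![(0 : Fin 3), (1 : Fin 3), (2 : Fin 3)], ![(0 : Fin 3), (1 : Fin 3), (2 : Fin 3)], ![false, false, false]),
   (![(0 : Fin 6), (1 : Fin 6), (2 : Fin 6)], ![false, false, false, false, true, false], ![(0 : Fin 3), (2 : Fin 3), (1 : Fin 3)], ![(0 : Fin 3), (2 : Fin 3), (1 : Fin 3)], ![true, false, false]),
   (![(0 : Fin 6), (1 : Fin 6), (2 : Fin 6)], ![false, false, false, true, true, false], ![(1 : Fin 3), (2 : Fin 3), (0 : Fin 3)], ![(2 : Fin 3), (0 : Fin 3), (1 : Fin 3)], ![true, false, true]),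
   (![(0 : Fin 6), (1 : Fin 6), (2 : Fin 6)], ![false, false, false, false, false, true], ![(1 : Fin 3), (2 : Fin 3), (0 : Fin 3)], ![(2 : Fin 3), (0 : Fin 3), (1 : Fin 3)], ![false, true, false]),
   (![(0 : Fin 6), (1 : Fin 6), (2 : Fin 6)], ![false, false, false, true, false, true], ![(0 : Fin 3), (2 : Fin 3), (1 : Fin 3)], ![(0 : Fin 3), (2 : Fin 3), (1 : Fin 3)], ![false, true, true]),
   (![(0 : Fin 6), (1 : Fin 6), (2 : Fin 6)], ![false, false, false, true, true, true], ![(0 : Fin 3), (1 : Fin 3), (2 : Fin 3)], ![(0 : Fin 3), (1 : Fin 3), (2 : Fin 3)], ![true, true, true]),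
   (![(0 : Fin 6), (1 : Fin 6), (3 : Fin 6)], ![false, false, true, false, false, false], ![(0 : Fin 3), (1 : Fin 3), (2 : Fin 3)], ![(0 : Fin 3), (1 : Fin 3), (2 : Fin 3)], ![true, true, true]),
   (![(0 : Fin 6), (1 : Fin 6), (3 : Fin 6)], ![false, false, false, false, true, false], ![(0 : Fin 3), (2 : Fin 3), (1 : Fin 3)], ![(0 : Fin 3), (2 : Fin 3), (1 : Fin 3)], ![true, false, false]),
   (![(0 : Fin 6), (1 : Fin 6), (3 : Fin 6)], ![false, false, true, false, true, false], ![(1 : Fin 3), (2 : Fin 3), (0 : Fin 3)], ![(2 : Fin 3), (0 : Fin 3), (1 : Fin 3)], ![true, false, true]),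
   (![(0 : Fin 6), (1 : Fin 6), (3 : Fin 6)], ![false, false, false, false, false, true], ![(1 : Fin 3), (2 : Fin 3), (0 : Fin 3)], ![(2 : Fin 3), (0 : Fin 3), (1 : Fin 3)], ![false, true, false]),
   (![(0 : Fin 6), (1 : Fin 6), (3 : Fin 6)], ![false, false, true, false, false, true], ![(0 : Fin 3), (2 : Fin 3), (1 : Fin 3)], ![(0 : Fin 3), (2 : Fin 3), (1 : Fin 3)], ![false, true, true]),
   (![(0 : Fin 6), (1 : Fin 6), (3 : Fin 6)], ![false, false, false, false, true, true], ![(0 : Fin 3), (1 : Fin 3), (2 : Fin 3)], ![(0 : Fin 3), (1 : Fin 3), (2 : Fin 3)], ![false, false, false]),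
   (![(0 : Fin 6), (1 : Fin 6), (4 : Fin 6)], ![false, false, false, false, false, false], ![(0 : Fin 3), (2 : Fin 3), (1 : Fin 3)], ![(0 : Fin 3), (2 : Fin 3), (1 : Fin 3)], ![true, true, true]),
   (![(0 : Fin 6), (1 : Fin 6), (4 : Fin 6)], ![false, false, false, true, false, false], ![(0 : Fin 3), (1 : Fin 3), (2 : Fin 3)], ![(0 : Fin 3), (1 : Fin 3), (2 : Fin 3)], ![false, true, true]),
   (![(0 : Fin 6), (1 : Fin 6), (4 : Fin 6)], ![false, false, true, true, false, false], ![(1 : Fin 3), (2 : Fin 3), (0 : Fin 3)], ![(2 : Fin 3), (0 : Fin 3), (1 : Fin 3)], ![false, false, true]),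
   (![(0 : Fin 6), (1 : Fin 6), (4 : Fin 6)], ![false, false, false, false, false, true], ![(1 : Fin 3), (2 : Fin 3), (0 : Fin 3)], ![(2 : Fin 3), (0 : Fin 3), (1 : Fin 3)], ![true, true, false]),
   (![(0 : Fin 6), (1 : Fin 6), (4 : Fin 6)], ![false, false, true, false, false, true], ![(0 : Fin 3), (1 : Fin 3), (2 : Fin 3)], ![(0 : Fin 3), (1 : Fin 3), (2 : Fin 3)], ![true, false, false]),
   (![(0 : Fin 6), (1 : Fin 6), (4 : Fin 6)], ![false, false, true, true, false, true], ![(0 : Fin 3), (2 : Fin 3), (1 : Fin 3)], ![(0 : Fin 3), (2 : Fin 3), (1 : Fin 3)], ![false, false, false]),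
   (![(0 : Fin 6), (1 : Fin 6), (5 : Fin 6)], ![false, false, false, false, false, false], ![(1 : Fin 3), (2 : Fin 3), (0 : Fin 3)], ![(2 : Fin 3), (0 : Fin 3), (1 : Fin 3)], ![true, true, true]),
   (![(0 : Fin 6), (1 : Fin 6), (5 : Fin 6)], ![false, false, false, true, false, false], ![(0 : Fin 3), (1 : Fin 3), (2 : Fin 3)], ![(0 : Fin 3), (1 : Fin 3), (2 : Fin 3)], ![true, false, true]),
   (![(0 : Fin 6), (1 : Fin 6), (5 : Fin 6)], ![false, false, true, true, false, false], ![(0 : Fin 3), (2 : Fin 3), (1 : Fin 3)], ![(0 : Fin 3), (2 : Fin 3), (1 : Fin 3)], ![false, false, true]),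
   (![(0 : Fin 6), (1 : Fin 6), (5 : Fin 6)], ![false, false, false, false, true, false], ![(0 : Fin 3), (2 : Fin 3), (1 : Fin 3)], ![(0 : Fin 3), (2 : Fin 3), (1 : Fin 3)], ![true, true, false]),
   (![(0 : Fin 6), (1 : Fin 6), (5 : Fin 6)], ![false, false, true, false, true, false], ![(0 : Fin 3), (1 : Fin 3), (2 : Fin 3)], ![(0 : Fin 3), (1 : Fin 3), (2 : Fin 3)], ![false, true, false]),
   (![(0 : Fin 6), (1 : Fin 6), (5 : Fin 6)], ![false, false, true, true, true, false], ![(1 : Fin 3), (2 : Fin 3), (0 : Fin 3)], ![(2 : Fin 3), (0 : Fin 3), (1 : Fin 3)], ![false, false, false]),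
   (![(0 : Fin 6), (2 : Fin 6), (3 : Fin 6)], ![false, false, false, false, false, false], ![(0 : Fin 3), (2 : Fin 3), (1 : Fin 3)], ![(0 : Fin 3), (2 : Fin 3), (1 : Fin 3)], ![false, true, false]),
   (![(0 : Fin 6), (2 : Fin 6), (3 : Fin 6)], ![false, true, false, false, false, false], ![(0 : Fin 3), (1 : Fin 3), (2 : Fin 3)], ![(0 : Fin 3), (1 : Fin 3), (2 : Fin 3)], ![true, true, false]),
   (![(0 : Fin 6), (2 : Fin 6), (3 : Fin 6)], ![false, false, false, false, true, false], ![(1 : Fin 3), (2 : Fin 3), (0 : Fin 3)], ![(2 : Fin 3), (0 : Fin 3), (1 : Fin 3)], ![false, true, true]),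
   (![(0 : Fin 6), (2 : Fin 6), (3 : Fin 6)], ![false, true, false, false, false, true], ![(1 : Fin 3), (2 : Fin 3), (0 : Fin 3)], ![(2 : Fin 3), (0 : Fin 3), (1 : Fin 3)], ![true, false, false]),
   (![(0 : Fin 6), (2 : Fin 6), (3 : Fin 6)], ![false, false, false, false, true, true], ![(0 : Fin 3), (1 : Fin 3), (2 : Fin 3)], ![(0 : Fin 3), (1 : Fin 3), (2 : Fin 3)], ![false, false, true]),
   (![(0 : Fin 6), (2 : Fin 6), (3 : Fin 6)], ![false, true, false, false, true, true], ![(0 : Fin 3), (2 : Fin 3), (1 : Fin 3)], ![(0 : Fin 3), (2 : Fin 3), (1 : Fin 3)], ![true, false, true]),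
   (![(0 : Fin 6), (2 : Fin 6), (4 : Fin 6)], ![false, false, false, false, false, false], ![(0 : Fin 3), (2 : Fin 3), (1 : Fin 3)], ![(0 : Fin 3), (2 : Fin 3), (1 : Fin 3)], ![false, true, false]),
   (![(0 : Fin 6), (2 : Fin 6), (4 : Fin 6)], ![false, false, false, true, false, false], ![(1 : Fin 3), (2 : Fin 3), (0 : Fin 3)], ![(2 : Fin 3), (0 : Fin 3), (1 : Fin 3)], ![false, true, true]),
   (![(0 : Fin 6), (2 : Fin 6), (4 : Fin 6)], ![false, true, false, true, false, false], ![(0 : Fin 3), (1 : Fin 3), (2 : Fin 3)], ![(0 : Fin 3), (1 : Fin 3), (2 : Fin 3)], ![false, false, true]),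
   (![(0 : Fin 6), (2 : Fin 6), (4 : Fin 6)], ![false, false, false, false, false, true], ![(0 : Fin 3), (1 : Fin 3), (2 : Fin 3)], ![(0 : Fin 3), (1 : Fin 3), (2 : Fin 3)], ![true, true, false]),
   (![(0 : Fin 6), (2 : Fin 6), (4 : Fin 6)], ![false, true, false, false, false, true], ![(1 : Fin 3), (2 : Fin 3), (0 : Fin 3)], ![(2 : Fin 3), (0 : Fin 3), (1 : Fin 3)], ![true, false, false]),
   (![(0 : Fin 6), (2 : Fin 6), (4 : Fin 6)], ![false, true, false, true, false, true], ![(0 : Fin 3), (2 : Fin 3), (1 : Fin 3)], ![(0 : Fin 3), (2 : Fin 3), (1 : Fin 3)], ![true, false, true]),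
   (![(0 : Fin 6), (2 : Fin 6), (5 : Fin 6)], ![false, false, false, false, false, false], ![(0 : Fin 3), (2 : Fin 3), (1 : Fin 3)], ![(0 : Fin 3), (2 : Fin 3), (1 : Fin 3)], ![false, false, false]),
   (![(0 : Fin 6), (2 : Fin 6), (5 : Fin 6)], ![false, true, false, false, false, false], ![(1 : Fin 3), (2 : Fin 3), (0 : Fin 3)], ![(2 : Fin 3), (0 : Fin 3), (1 : Fin 3)], ![false, false, true]),
   (![(0 : Fin 6), (2 : Fin 6), (5 : Fin 6)], ![false, false, false, true, false, false], ![(0 : Fin 3), (1 : Fin 3), (2 : Fin 3)], ![(0 : Fin 3), (1 : Fin 3), (2 : Fin 3)], ![true, false, false]),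
   (![(0 : Fin 6), (2 : Fin 6), (5 : Fin 6)], ![false, true, false, false, true, false], ![(0 : Fin 3), (1 : Fin 3), (2 : Fin 3)], ![(0 : Fin 3), (1 : Fin 3), (2 : Fin 3)], ![false, true, true]),
   (![(0 : Fin 6), (2 : Fin 6), (5 : Fin 6)], ![false, false, false, true, true, false], ![(1 : Fin 3), (2 : Fin 3), (0 : Fin 3)], ![(2 : Fin 3), (0 : Fin 3), (1 : Fin 3)], ![true, true, false]),
   (![(0 : Fin 6), (2 : Fin 6), (5 : Fin 6)], ![false, true, false, true, true, false], ![(0 : Fin 3), (2 : Fin 3), (1 : Fin 3)], ![(0 : Fin 3), (2 : Fin 3), (1 : Fin 3)], ![true, true, true]),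
   (![(0 : Fin 6), (3 : Fin 6), (4 : Fin 6)], ![false, true, false, false, false, false], ![(0 : Fin 3), (1 : Fin 3), (2 : Fin 3)], ![(0 : Fin 3), (1 : Fin 3), (2 : Fin 3)], ![false, true, false]),
   (![(0 : Fin 6), (3 : Fin 6), (4 : Fin 6)], ![false, false, true, false, false, false], ![(1 : Fin 3), (2 : Fin 3), (0 : Fin 3)], ![(2 : Fin 3), (0 : Fin 3), (1 : Fin 3)], ![true, true, true]),
   (![(0 : Fin 6), (3 : Fin 6), (4 : Fin 6)], ![false, true, true, false, false, false], ![(0 : Fin 3), (2 : Fin 3), (1 : Fin 3)], ![(0 : Fin 3), (2 : Fin 3), (1 : Fin 3)], ![true, true, false]),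
   (![(0 : Fin 6), (3 : Fin 6), (4 : Fin 6)], ![false, false, false, false, false, true], ![(0 : Fin 3), (2 : Fin 3), (1 : Fin 3)], ![(0 : Fin 3), (2 : Fin 3), (1 : Fin 3)], ![false, false, true]),
   (![(0 : Fin 6), (3 : Fin 6), (4 : Fin 6)], ![false, true, false, false, false, true], ![(1 : Fin 3), (2 : Fin 3), (0 : Fin 3)], ![(2 : Fin 3), (0 : Fin 3), (1 : Fin 3)], ![false, false, false]),
   (![(0 : Fin 6), (3 : Fin 6), (4 : Fin 6)], ![false, false, true, false, false, true], ![(0 : Fin 3), (1 : Fin 3), (2 : Fin 3)], ![(0 : Fin 3), (1 : Fin 3), (2 : Fin 3)], ![true, false, true]),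
   (![(0 : Fin 6), (3 : Fin 6), (5 : Fin 6)], ![false, false, false, false, false, false], ![(0 : Fin 3), (1 : Fin 3), (2 : Fin 3)], ![(0 : Fin 3), (1 : Fin 3), (2 : Fin 3)], ![true, true, true]),
   (![(0 : Fin 6), (3 : Fin 6), (5 : Fin 6)], ![false, true, false, false, false, false], ![(1 : Fin 3), (2 : Fin 3), (0 : Fin 3)], ![(2 : Fin 3), (0 : Fin 3), (1 : Fin 3)], ![true, false, true]),
   (![(0 : Fin 6), (3 : Fin 6), (5 : Fin 6)], ![false, true, true, false, false, false], ![(0 : Fin 3), (2 : Fin 3), (1 : Fin 3)], ![(0 : Fin 3), (2 : Fin 3), (1 : Fin 3)], ![true, false, false]),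
   (![(0 : Fin 6), (3 : Fin 6), (5 : Fin 6)], ![false, false, false, false, true, false], ![(0 : Fin 3), (2 : Fin 3), (1 : Fin 3)], ![(0 : Fin 3), (2 : Fin 3), (1 : Fin 3)], ![false, true, true]),
   (![(0 : Fin 6), (3 : Fin 6), (5 : Fin 6)], ![false, false, true, false, true, false], ![(1 : Fin 3), (2 : Fin 3), (0 : Fin 3)], ![(2 : Fin 3), (0 : Fin 3), (1 : Fin 3)], ![false, true, false]),
   (![(0 : Fin 6), (3 : Fin 6), (5 : Fin 6)], ![false, true, true, false, true, false], ![(0 : Fin 3), (1 : Fin 3), (2 : Fin 3)], ![(0 : Fin 3), (1 : Fin 3), (2 : Fin 3)], ![false, false, false]),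
   (![(0 : Fin 6), (4 : Fin 6), (5 : Fin 6)], ![false, true, false, false, false, false], ![(1 : Fin 3), (2 : Fin 3), (0 : Fin 3)], ![(2 : Fin 3), (0 : Fin 3), (1 : Fin 3)], ![false, false, true]),
   (![(0 : Fin 6), (4 : Fin 6), (5 : Fin 6)], ![false, false, true, false, false, false], ![(0 : Fin 3), (2 : Fin 3), (1 : Fin 3)], ![(0 : Fin 3), (2 : Fin 3), (1 : Fin 3)], ![true, true, true]),
   (![(0 : Fin 6), (4 : Fin 6), (5 : Fin 6)], ![false, true, true, false, false, false], ![(0 : Fin 3), (1 : Fin 3), (2 : Fin 3)], ![(0 : Fin 3), (1 : Fin 3), (2 : Fin 3)], ![false, true, true]),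
   (![(0 : Fin 6), (4 : Fin 6), (5 : Fin 6)], ![false, false, false, true, false, false], ![(0 : Fin 3), (1 : Fin 3), (2 : Fin 3)], ![(0 : Fin 3), (1 : Fin 3), (2 : Fin 3)], ![true, false, false]),
   (![(0 : Fin 6), (4 : Fin 6), (5 : Fin 6)], ![false, true, false, true, false, false], ![(0 : Fin 3), (2 : Fin 3), (1 : Fin 3)], ![(0 : Fin 3), (2 : Fin 3), (1 : Fin 3)], ![false, false, false]),
   (![(0 : Fin 6), (4 : Fin 6), (5 : Fin 6)], ![false, false, true, true, false, false], ![(1 : Fin 3), (2 : Fin 3), (0 : Fin 3)], ![(2 : Fin 3), (0 : Fin 3), (1 : Fin 3)], ![true, true, false]),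
   (![(1 : Fin 6), (2 : Fin 6), (3 : Fin 6)], ![false, false, false, false, false, false], ![(0 : Fin 3), (2 : Fin 3), (1 : Fin 3)], ![(0 : Fin 3), (2 : Fin 3), (1 : Fin 3)], ![false, true, false]),
   (![(1 : Fin 6), (2 : Fin 6), (3 : Fin 6)], ![true, false, false, false, false, false], ![(0 : Fin 3), (1 : Fin 3), (2 : Fin 3)], ![(0 : Fin 3), (1 : Fin 3), (2 : Fin 3)], ![true, true, false]),
   (![(1 : Fin 6), (2 : Fin 6), (3 : Fin 6)], ![true, false, false, false, true, false], ![(1 : Fin 3), (2 : Fin 3), (0 : Fin 3)], ![(2 : Fin 3), (0 : Fin 3), (1 : Fin 3)], ![true, false, false]),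
   (![(1 : Fin 6), (2 : Fin 6), (3 : Fin 6)], ![false, false, false, false, false, true], ![(1 : Fin 3), (2 : Fin 3), (0 : Fin 3)], ![(2 : Fin 3), (0 : Fin 3), (1 : Fin 3)], ![false, true, true]),
   (![(1 : Fin 6), (2 : Fin 6), (3 : Fin 6)], ![false, false, false, false, true, true], ![(0 : Fin 3), (1 : Fin 3), (2 : Fin 3)], ![(0 : Fin 3), (1 : Fin 3), (2 : Fin 3)], ![false, false, true]),
   (![(1 : Fin 6), (2 : Fin 6), (3 : Fin 6)], ![true, false, false, false, true, true], ![(0 : Fin 3), (2 : Fin 3), (1 : Fin 3)], ![(0 : Fin 3), (2 : Fin 3), (1 : Fin 3)], ![true, false, true]),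
   (![(1 : Fin 6), (2 : Fin 6), (4 : Fin 6)], ![false, false, false, false, false, false], ![(0 : Fin 3), (2 : Fin 3), (1 : Fin 3)], ![(0 : Fin 3), (2 : Fin 3), (1 : Fin 3)], ![false, false, false]),
   (![(1 : Fin 6), (2 : Fin 6), (4 : Fin 6)], ![true, false, false, false, false, false], ![(1 : Fin 3), (2 : Fin 3), (0 : Fin 3)], ![(2 : Fin 3), (0 : Fin 3), (1 : Fin 3)], ![false, false, true]),
   (![(1 : Fin 6), (2 : Fin 6), (4 : Fin 6)], ![false, false, false, true, false, false], ![(0 : Fin 3), (1 : Fin 3), (2 : Fin 3)], ![(0 : Fin 3), (1 : Fin 3), (2 : Fin 3)], ![true, false, false]),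
   (![(1 : Fin 6), (2 : Fin 6), (4 : Fin 6)], ![true, false, false, false, false, true], ![(0 : Fin 3), (1 : Fin 3), (2 : Fin 3)], ![(0 : Fin 3), (1 : Fin 3), (2 : Fin 3)], ![false, true, true]),
   (![(1 : Fin 6), (2 : Fin 6), (4 : Fin 6)], ![false, false, false, true, false, true], ![(1 : Fin 3), (2 : Fin 3), (0 : Fin 3)], ![(2 : Fin 3), (0 : Fin 3), (1 : Fin 3)], ![true, true, false]),
   (![(1 : Fin 6), (2 : Fin 6), (4 : Fin 6)], ![true, false, false, true, false, true], ![(0 : Fin 3), (2 : Fin 3), (1 : Fin 3)], ![(0 : Fin 3), (2 : Fin 3), (1 : Fin 3)], ![true, true, true]),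
   (![(1 : Fin 6), (2 : Fin 6), (5 : Fin 6)], ![false, false, false, false, false, false], ![(0 : Fin 3), (2 : Fin 3), (1 : Fin 3)], ![(0 : Fin 3), (2 : Fin 3), (1 : Fin 3)], ![false, true, false]),
   (![(1 : Fin 6), (2 : Fin 6), (5 : Fin 6)], ![false, false, false, true, false, false], ![(1 : Fin 3), (2 : Fin 3), (0 : Fin 3)], ![(2 : Fin 3), (0 : Fin 3), (1 : Fin 3)], ![false, true, true]),
   (![(1 : Fin 6), (2 : Fin 6), (5 : Fin 6)], ![true, false, false, true, false, false], ![(0 : Fin 3), (1 : Fin 3), (2 : Fin 3)], ![(0 : Fin 3), (1 : Fin 3), (2 : Fin 3)], ![false, false, true]),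
   (![(1 : Fin 6), (2 : Fin 6), (5 : Fin 6)], ![false, false, false, false, true, false], ![(0 : Fin 3), (1 : Fin 3), (2 : Fin 3)], ![(0 : Fin 3), (1 : Fin 3), (2 : Fin 3)], ![true, true, false]),
   (![(1 : Fin 6), (2 : Fin 6), (5 : Fin 6)], ![true, false, false, false, true, false], ![(1 : Fin 3), (2 : Fin 3), (0 : Fin 3)], ![(2 : Fin 3), (0 : Fin 3), (1 : Fin 3)], ![true, false, false]),
   (![(1 : Fin 6), (2 : Fin 6), (5 : Fin 6)], ![true, false, false, true, true, false], ![(0 : Fin 3), (2 : Fin 3), (1 : Fin 3)], ![(0 : Fin 3), (2 : Fin 3), (1 : Fin 3)], ![true, false, true]),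
   (![(1 : Fin 6), (3 : Fin 6), (4 : Fin 6)], ![false, false, false, false, false, false], ![(0 : Fin 3), (1 : Fin 3), (2 : Fin 3)], ![(0 : Fin 3), (1 : Fin 3), (2 : Fin 3)], ![true, true, true]),
   (![(1 : Fin 6), (3 : Fin 6), (4 : Fin 6)], ![true, false, false, false, false, false], ![(1 : Fin 3), (2 : Fin 3), (0 : Fin 3)], ![(2 : Fin 3), (0 : Fin 3), (1 : Fin 3)], ![true, false, true]),
   (![(1 : Fin 6), (3 : Fin 6), (4 : Fin 6)], ![true, false, true, false, false, false], ![(0 : Fin 3), (2 : Fin 3), (1 : Fin 3)], ![(0 : Fin 3), (2 : Fin 3), (1 : Fin 3)], ![true, false, false]),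
   (![(1 : Fin 6), (3 : Fin 6), (4 : Fin 6)], ![false, false, false, false, false, true], ![(0 : Fin 3), (2 : Fin 3), (1 : Fin 3)], ![(0 : Fin 3), (2 : Fin 3), (1 : Fin 3)], ![false, true, true]),
   (![(1 : Fin 6), (3 : Fin 6), (4 : Fin 6)], ![false, false, true, false, false, true], ![(1 : Fin 3), (2 : Fin 3), (0 : Fin 3)], ![(2 : Fin 3), (0 : Fin 3), (1 : Fin 3)], ![false, true, false]),
   (![(1 : Fin 6), (3 : Fin 6), (4 : Fin 6)], ![true, false, true, false, false, true], ![(0 : Fin 3), (1 : Fin 3), (2 : Fin 3)], ![(0 : Fin 3), (1 : Fin 3), (2 : Fin 3)], ![false, false, false]),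
   (![(1 : Fin 6), (3 : Fin 6), (5 : Fin 6)], ![true, false, false, false, false, false], ![(0 : Fin 3), (1 : Fin 3), (2 : Fin 3)], ![(0 : Fin 3), (1 : Fin 3), (2 : Fin 3)], ![false, true, false]),
   (![(1 : Fin 6), (3 : Fin 6), (5 : Fin 6)], ![false, false, true, false, false, false], ![(1 : Fin 3), (2 : Fin 3), (0 : Fin 3)], ![(2 : Fin 3), (0 : Fin 3), (1 : Fin 3)], ![true, true, true]),
   (![(1 : Fin 6), (3 : Fin 6), (5 : Fin 6)], ![true, false, true, false, false, false], ![(0 : Fin 3), (2 : Fin 3), (1 : Fin 3)], ![(0 : Fin 3), (2 : Fin 3), (1 : Fin 3)], ![true, true, false]),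
   (![(1 : Fin 6), (3 : Fin 6), (5 : Fin 6)], ![false, false, false, false, true, false], ![(0 : Fin 3), (2 : Fin 3), (1 : Fin 3)], ![(0 : Fin 3), (2 : Fin 3), (1 : Fin 3)], ![false, false, true]),
   (![(1 : Fin 6), (3 : Fin 6), (5 : Fin 6)], ![true, false, false, false, true, false], ![(1 : Fin 3), (2 : Fin 3), (0 : Fin 3)], ![(2 : Fin 3), (0 : Fin 3), (1 : Fin 3)], ![false, false, false]),
   (![(1 : Fin 6), (3 : Fin 6), (5 : Fin 6)], ![false, false, true, false, true, false], ![(0 : Fin 3), (1 : Fin 3), (2 : Fin 3)], ![(0 : Fin 3), (1 : Fin 3), (2 : Fin 3)], ![true, false, true]),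
   (![(1 : Fin 6), (4 : Fin 6), (5 : Fin 6)], ![true, false, false, false, false, false], ![(1 : Fin 3), (2 : Fin 3), (0 : Fin 3)], ![(2 : Fin 3), (0 : Fin 3), (1 : Fin 3)], ![false, true, false]),
   (![(1 : Fin 6), (4 : Fin 6), (5 : Fin 6)], ![false, false, true, false, false, false], ![(0 : Fin 3), (1 : Fin 3), (2 : Fin 3)], ![(0 : Fin 3), (1 : Fin 3), (2 : Fin 3)], ![true, true, true]),
   (![(1 : Fin 6), (4 : Fin 6), (5 : Fin 6)], ![true, false, true, false, false, false], ![(0 : Fin 3), (2 : Fin 3), (1 : Fin 3)], ![(0 : Fin 3), (2 : Fin 3), (1 : Fin 3)], ![false, true, true]),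
   (![(1 : Fin 6), (4 : Fin 6), (5 : Fin 6)], ![false, false, false, true, false, false], ![(0 : Fin 3), (2 : Fin 3), (1 : Fin 3)], ![(0 : Fin 3), (2 : Fin 3), (1 : Fin 3)], ![true, false, false]),
   (![(1 : Fin 6), (4 : Fin 6), (5 : Fin 6)], ![true, false, false, true, false, false], ![(0 : Fin 3), (1 : Fin 3), (2 : Fin 3)], ![(0 : Fin 3), (1 : Fin 3), (2 : Fin 3)], ![false, false, false]),
   (![(1 : Fin 6), (4 : Fin 6), (5 : Fin 6)], ![false, false, true, true, false, false], ![(1 : Fin 3), (2 : Fin 3), (0 : Fin 3)], ![(2 : Fin 3), (0 : Fin 3), (1 : Fin 3)], ![true, false, true]),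
   (![(2 : Fin 6), (3 : Fin 6), (4 : Fin 6)], ![false, false, false, false, false, false], ![(1 : Fin 3), (2 : Fin 3), (0 : Fin 3)], ![(2 : Fin 3), (0 : Fin 3), (1 : Fin 3)], ![false, false, false]),
   (![(2 : Fin 6), (3 : Fin 6), (4 : Fin 6)], ![false, true, false, false, false, false], ![(0 : Fin 3), (1 : Fin 3), (2 : Fin 3)], ![(0 : Fin 3), (1 : Fin 3), (2 : Fin 3)], ![false, true, false]),
   (![(2 : Fin 6), (3 : Fin 6), (4 : Fin 6)], ![true, true, false, false, false, false], ![(0 : Fin 3), (2 : Fin 3), (1 : Fin 3)], ![(0 : Fin 3), (2 : Fin 3), (1 : Fin 3)], ![true, true, false]),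
   (![(2 : Fin 6), (3 : Fin 6), (4 : Fin 6)], ![false, false, false, false, false, true], ![(0 : Fin 3), (2 : Fin 3), (1 : Fin 3)], ![(0 : Fin 3), (2 : Fin 3), (1 : Fin 3)], ![false, false, true]),
   (![(2 : Fin 6), (3 : Fin 6), (4 : Fin 6)], ![true, false, false, false, false, true], ![(0 : Fin 3), (1 : Fin 3), (2 : Fin 3)], ![(0 : Fin 3), (1 : Fin 3), (2 : Fin 3)], ![true, false, true]),
   (![(2 : Fin 6), (3 : Fin 6), (4 : Fin 6)], ![true, true, false, false, false, true], ![(1 : Fin 3), (2 : Fin 3), (0 : Fin 3)], ![(2 : Fin 3), (0 : Fin 3), (1 : Fin 3)], ![true, true, true]),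
   (![(2 : Fin 6), (3 : Fin 6), (5 : Fin 6)], ![false, false, false, false, false, false], ![(1 : Fin 3), (2 : Fin 3), (0 : Fin 3)], ![(2 : Fin 3), (0 : Fin 3), (1 : Fin 3)], ![false, false, false]),
   (![(2 : Fin 6), (3 : Fin 6), (5 : Fin 6)], ![true, false, false, false, false, false], ![(0 : Fin 3), (1 : Fin 3), (2 : Fin 3)], ![(0 : Fin 3), (1 : Fin 3), (2 : Fin 3)], ![false, true, false]),
   (![(2 : Fin 6), (3 : Fin 6), (5 : Fin 6)], ![true, true, false, false, false, false], ![(0 : Fin 3), (2 : Fin 3), (1 : Fin 3)], ![(0 : Fin 3), (2 : Fin 3), (1 : Fin 3)], ![true, true, false]),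
   (![(2 : Fin 6), (3 : Fin 6), (5 : Fin 6)], ![false, false, false, false, true, false], ![(0 : Fin 3), (2 : Fin 3), (1 : Fin 3)], ![(0 : Fin 3), (2 : Fin 3), (1 : Fin 3)], ![false, false, true]),
   (![(2 : Fin 6), (3 : Fin 6), (5 : Fin 6)], ![false, true, false, false, true, false], ![(0 : Fin 3), (1 : Fin 3), (2 : Fin 3)], ![(0 : Fin 3), (1 : Fin 3), (2 : Fin 3)], ![true, false, true]),
   (![(2 : Fin 6), (3 : Fin 6), (5 : Fin 6)], ![true, true, false, false, true, false], ![(1 : Fin 3), (2 : Fin 3), (0 : Fin 3)], ![(2 : Fin 3), (0 : Fin 3), (1 : Fin 3)], ![true, true, true]),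
   (![(2 : Fin 6), (4 : Fin 6), (5 : Fin 6)], ![false, false, false, false, false, false], ![(1 : Fin 3), (2 : Fin 3), (0 : Fin 3)], ![(2 : Fin 3), (0 : Fin 3), (1 : Fin 3)], ![true, false, false]),
   (![(2 : Fin 6), (4 : Fin 6), (5 : Fin 6)], ![true, false, false, false, false, false], ![(0 : Fin 3), (2 : Fin 3), (1 : Fin 3)], ![(0 : Fin 3), (2 : Fin 3), (1 : Fin 3)], ![true, false, true]),
   (![(2 : Fin 6), (4 : Fin 6), (5 : Fin 6)], ![false, true, false, false, false, false], ![(0 : Fin 3), (1 : Fin 3), (2 : Fin 3)], ![(0 : Fin 3), (1 : Fin 3), (2 : Fin 3)], ![true, true, false]),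
   (![(2 : Fin 6), (4 : Fin 6), (5 : Fin 6)], ![true, false, false, true, false, false], ![(0 : Fin 3), (1 : Fin 3), (2 : Fin 3)], ![(0 : Fin 3), (1 : Fin 3), (2 : Fin 3)], ![false, false, true]),
   (![(2 : Fin 6), (4 : Fin 6), (5 : Fin 6)], ![false, true, false, true, false, false], ![(0 : Fin 3), (2 : Fin 3), (1 : Fin 3)], ![(0 : Fin 3), (2 : Fin 3), (1 : Fin 3)], ![false, true, false]),
   (![(2 : Fin 6), (4 : Fin 6), (5 : Fin 6)], ![true, true, false, true, false, false], ![(1 : Fin 3), (2 : Fin 3), (0 : Fin 3)], ![(2 : Fin 3), (0 : Fin 3), (1 : Fin 3)], ![false, true, true]),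
   (![(3 : Fin 6), (4 : Fin 6), (5 : Fin 6)], ![false, false, false, false, false, false], ![(1 : Fin 3), (2 : Fin 3), (0 : Fin 3)], ![(2 : Fin 3), (0 : Fin 3), (1 : Fin 3)], ![true, true, true]),
   (![(3 : Fin 6), (4 : Fin 6), (5 : Fin 6)], ![true, false, false, false, false, false], ![(0 : Fin 3), (1 : Fin 3), (2 : Fin 3)], ![(0 : Fin 3), (1 : Fin 3), (2 : Fin 3)], ![true, false, true]),
   (![(3 : Fin 6), (4 : Fin 6), (5 : Fin 6)], ![false, true, false, false, false, false], ![(0 : Fin 3), (2 : Fin 3), (1 : Fin 3)], ![(0 : Fin 3), (2 : Fin 3), (1 : Fin 3)], ![true, true, false]),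
   (![(3 : Fin 6), (4 : Fin 6), (5 : Fin 6)], ![true, false, true, false, false, false], ![(0 : Fin 3), (2 : Fin 3), (1 : Fin 3)], ![(0 : Fin 3), (2 : Fin 3), (1 : Fin 3)], ![false, false, true]),
   (![(3 : Fin 6), (4 : Fin 6), (5 : Fin 6)], ![false, true, true, false, false, false], ![(0 : Fin 3), (1 : Fin 3), (2 : Fin 3)], ![(0 : Fin 3), (1 : Fin 3), (2 : Fin 3)], ![false, true, false]),
   (![(3 : Fin 6), (4 : Fin 6), (5 : Fin 6)], ![true, true, true, false, false, false], ![(1 : Fin 3), (2 : Fin 3), (0 : Fin 3)], ![(2 : Fin 3), (0 : Fin 3), (1 : Fin 3)], ![false, false, false])]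

lemma hLen : G5L.length = 120 := rfl

def ENT (i : Fin 120) : Tup := G5L[(i : ℕ)]'(by rw [hLen]; exact i.isLt)

def Psi (jE : Fin 3 → Fin 6) (τ : Fin 6 → Bool) (w : Fin 3 → Bool) : Fin 6 → Bool :=
  fun j => if j = jE 0 then w 0 else if j = jE 1 then w 1 else if j = jE 2 then w 2 else τ j

def W10L : List (Fin 3 → Bool) := [![false, false, false], ![false, false, true], ![true, true, true]]

def W10set : Set (Fin 3 → Bool) :=
  {![false, false, false], ![false, false, true], ![true, true, true]}

def encT (jE : Fin 3 → Fin 6) (τ : Fin 6 → Bool) : ℕ :=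
  ((jE 0).1 * 36 + (jE 1).1 * 6 + (jE 2).1) * 64 +
    (cond (τ 0) 1 0) + 2 * (cond (τ 1) 1 0) + 4 * (cond (τ 2) 1 0) + 8 * (cond (τ 3) 1 0) +
    16 * (cond (τ 4) 1 0) + 32 * (cond (τ 5) 1 0)

set_option maxRecDepth 1000000 in
set_option maxHeartbeats 4000000 in
lemma hMono : ∀ i : Fin 120, (ENT i).1 0 < (ENT i).1 1 ∧ (ENT i).1 1 < (ENT i).1 2 := by decide

set_option maxRecDepth 1000000 in
set_option maxHeartbeats 4000000 in
lemma hTau : ∀ i : Fin 120, ∀ k : Fin 3, (ENT i).2.1 ((ENT i).1 k) = false := by decide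

set_option maxRecDepth 1000000 in
set_option maxHeartbeats 4000000 in
lemma hKey : ∀ i : Fin 119,
    encT (ENT (Fin.castSucc i)).1 (ENT (Fin.castSucc i)).2.1 <
    encT (ENT (Fin.succ i)).1 (ENT (Fin.succ i)).2.1 := by decide

set_option maxRecDepth 1000000 in
set_option maxHeartbeats 4000000 in
lemma hInv : ∀ i : Fin 120, (∀ x, (ENT i).2.2.2.1 ((ENT i).2.2.1 x) = x)
    ∧ (∀ x, (ENT i).2.2.1 ((ENT i).2.2.2.1 x) = x) := by decide

set_option maxRecDepth 1000000 in
set_option maxHeartbeats 4000000 in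
lemma hCopy : ∀ i : Fin 120, ∀ u : Fin 3 → Bool,
    ((∃ w ∈ W10L, (fun x => xor (w ((ENT i).2.2.2.1 x)) ((ENT i).2.2.2.2 x)) = u) ↔
      Psi (ENT i).1 (ENT i).2.1 u ∈ A6L) := by decide

end W10
namespace W10
open CubeDensity

/-! ### Coordinates of `Q_{6(m'+1)}` in blocks -/

variable {m' : ℕ}

def emb6 (m' : ℕ) (j : Fin 6) (a : Fin (m' + 1)) : Fin (6 * (m' + 1)) :=
  ⟨(m' + 1) * j.1 + a.1, by
    have hj := j.2
    have ha := a.2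
    nlinarith⟩

def blk (i : Fin (6 * (m' + 1))) : Fin 6 :=
  ⟨i.1 / (m' + 1), by
    rw [Nat.div_lt_iff_lt_mul (Nat.succ_pos m')]
    simpa [mul_comm] using i.2⟩

def posn (i : Fin (6 * (m' + 1))) : Fin (m' + 1) :=
  ⟨i.1 % (m' + 1), Nat.mod_lt _ (Nat.succ_pos m')⟩

@[simp] lemma blk_emb6 (j : Fin 6) (a : Fin (m' + 1)) : blk (emb6 m' j a) = j := by
  apply Fin.ext
  show ((m' + 1) * j.1 + a.1) / (m' + 1) = j.1
  rw [Nat.mul_add_div (Nat.succ_pos m'), Nat.div_eq_of_lt a.2, Nat.add_zero]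

@[simp] lemma posn_emb6 (j : Fin 6) (a : Fin (m' + 1)) : posn (emb6 m' j a) = a := by
  apply Fin.ext
  show ((m' + 1) * j.1 + a.1) % (m' + 1) = a.1
  rw [Nat.mul_add_mod, Nat.mod_eq_of_lt a.2]

lemma emb6_blk_posn (i : Fin (6 * (m' + 1))) : emb6 m' (blk i) (posn i) = i := by
  apply Fin.ext
  exact Nat.div_add_mod i.1 (m' + 1)

lemma emb6_lt_emb6 {j j' : Fin 6} (h : j < j') (a a' : Fin (m' + 1)) :
    emb6 m' j a < emb6 m' j' a' := by
  show (m' + 1) * j.1 + a.1 < (m' + 1) * j'.1 + a'.1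
  have h1 : j.1 + 1 ≤ j'.1 := h
  have ha := a.2
  nlinarith

/-- Parity of `v` on block `j`, in `ZMod 2`. -/
def parB (v : Fin (6 * (m' + 1)) → Bool) (j : Fin 6) : ZMod 2 :=
  ∑ a : Fin (m' + 1), tb (v (emb6 m' j a))

/-- The blown-up set: a vertex belongs to `SCon` iff its six block parities form a
vector in `A6L`. -/
def SCon (m' : ℕ) : Set (Fin (6 * (m' + 1)) → Bool) :=
  {v | (fun j => zb (parB v j)) ∈ A6L}

/-! ### The good subcubes associated to an entry -/

section Entry

variable (m' : ℕ) (i : Fin 120) (c : Fin 3 → Fin (m' + 1)) (f : Fin 6 → Fin m' → Bool)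

def jE : Fin 3 → Fin 6 := (ENT i).1
def tauE : Fin 6 → Bool := (ENT i).2.1

lemma jE_mono : StrictMono (jE i) := by
  rw [Fin.strictMono_iff_lt_succ]
  intro b
  fin_cases b
  · exact (hMono i).1
  · exact (hMono i).2

def slotF (k : Fin 3) : Fin (m' + 1) → Bool :=
  Fin.insertNth (c k) false (f (jE i k))

def nfF (j : Fin 6) : Fin (m' + 1) → Bool :=
  Fin.snoc (f j) (zb (tb (tauE i j) + ∑ b, tb (f j b)))

def bodyF (j : Fin 6) : Fin (m' + 1) → Bool :=
  if j = jE i 0 then slotF m' i c f 0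
  else if j = jE i 1 then slotF m' i c f 1
  else if j = jE i 2 then slotF m' i c f 2
  else nfF m' i f j

def gCon : Fin (6 * (m' + 1)) → Bool := fun x => bodyF m' i c f (blk x) (posn x)

def phiM : Fin 3 → Fin (6 * (m' + 1)) := fun k => emb6 m' (jE i k) (c k)

lemma phiM_mono : StrictMono (phiM m' i c) := by
  intro k k' h
  exact emb6_lt_emb6 (jE_mono i h) _ _

def FCon : Finset (Fin (6 * (m' + 1))) := Finset.image (phiM m' i c) Finset.univ

lemma mem_FCon {x : Fin (6 * (m' + 1))} :
    x ∈ FCon m' i c ↔ ∃ k, phiM m' i c k = x := by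
  simp [FCon]

lemma hFC : (FCon m' i c).card = 3 := by
  rw [FCon, Finset.card_image_of_injective _ (phiM_mono m' i c).injective,
    Finset.card_univ, Fintype.card_fin]

lemma bodyF_flip (k : Fin 3) :
    bodyF m' i c f (jE i k) = slotF m' i c f k := by
  have h01 : jE i 1 ≠ jE i 0 := ((hMono i).1).ne'
  have h02 : jE i 2 ≠ jE i 0 := (lt_trans (hMono i).1 (hMono i).2).ne'
  have h12 : jE i 2 ≠ jE i 1 := ((hMono i).2).ne'
  fin_cases k
  · simp [bodyF]
  · simp [bodyF, h01]
  · simp [bodyF, h02, h12]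

lemma bodyF_nf {j : Fin 6} (h : ∀ k, j ≠ jE i k) :
    bodyF m' i c f j = nfF m' i f j := by
  simp [bodyF, h 0, h 1, h 2]

lemma gCon_phiM (k : Fin 3) : gCon m' i c f (phiM m' i c k) = false := by
  show bodyF m' i c f (blk (phiM m' i c k)) (posn (phiM m' i c k)) = false
  rw [phiM, blk_emb6, posn_emb6, bodyF_flip, slotF, Fin.insertNth_apply_same]

lemma gCon_flip (k : Fin 3) (a : Fin (m' + 1)) :
    gCon m' i c f (emb6 m' (jE i k) a) = slotF m' i c f k a := by
  show bodyF m' i c f _ _ = _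
  rw [blk_emb6, posn_emb6, bodyF_flip]

lemma gCon_nf {j : Fin 6} (h : ∀ k, j ≠ jE i k) (a : Fin (m' + 1)) :
    gCon m' i c f (emb6 m' j a) = nfF m' i f j a := by
  show bodyF m' i c f _ _ = _
  rw [blk_emb6, posn_emb6, bodyF_nf m' i c f h]

/-- membership facts -/
lemma emb6_not_mem_nf {j : Fin 6} (h : ∀ k, j ≠ jE i k) (a : Fin (m' + 1)) :
    emb6 m' j a ∉ FCon m' i c := by
  rw [mem_FCon]
  rintro ⟨k, hk⟩
  have := congrArg blk hk
  rw [phiM, blk_emb6, blk_emb6] at this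
  exact h k this.symm

lemma emb6_not_mem_flip (k : Fin 3) {a : Fin (m' + 1)} (ha : a ≠ c k) :
    emb6 m' (jE i k) a ∉ FCon m' i c := by
  rw [mem_FCon]
  rintro ⟨k', hk⟩
  have hb := congrArg blk hk
  have hp := congrArg posn hk
  rw [phiM, blk_emb6, blk_emb6] at hb
  rw [phiM, posn_emb6, posn_emb6] at hp
  have : k' = k := (jE_mono i).injective hb
  rw [this] at hp
  exact ha hp.symm

/-! values of the embedded cube -/

lemma embed_at_phiM (u : Fin 3 → Bool) (k : Fin 3) :
    embed (FCon m' i c) (hFC m' i c) (gCon m' i c f) u (phiM m' i c k) = u k := by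
  have hm : phiM m' i c k ∈ FCon m' i c := (mem_FCon m' i c).2 ⟨k, rfl⟩
  rw [embed, dif_pos hm]
  congr 1
  exact orderIsoOfFin_symm_apply_eq (hFC m' i c) (phiM_mono m' i c)
    (fun k => (mem_FCon m' i c).2 ⟨k, rfl⟩) k hm

lemma embed_at_nf (u : Fin 3 → Bool) {j : Fin 6} (h : ∀ k, j ≠ jE i k) (a : Fin (m' + 1)) :
    embed (FCon m' i c) (hFC m' i c) (gCon m' i c f) u (emb6 m' j a) = nfF m' i f j a := by
  rw [embed, dif_neg (emb6_not_mem_nf m' i c h a)]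
  exact gCon_nf m' i c f h a

lemma embed_at_flip (u : Fin 3 → Bool) (k : Fin 3) {a : Fin (m' + 1)} (ha : a ≠ c k) :
    embed (FCon m' i c) (hFC m' i c) (gCon m' i c f) u (emb6 m' (jE i k) a) =
      slotF m' i c f k a := by
  rw [embed, dif_neg (emb6_not_mem_flip m' i c k ha)]
  exact gCon_flip m' i c f k a

/-! parity computations -/

lemma parB_embed_nf (u : Fin 3 → Bool) {j : Fin 6} (h : ∀ k, j ≠ jE i k) :
    parB (embed (FCon m' i c) (hFC m' i c) (gCon m' i c f) u) j = tb (tauE i j) := by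
  unfold parB
  calc ∑ a : Fin (m' + 1), tb (embed (FCon m' i c) (hFC m' i c) (gCon m' i c f) u (emb6 m' j a))
      = ∑ a : Fin (m' + 1), tb (nfF m' i f j a) := by
        exact Finset.sum_congr rfl (fun a _ => by rw [embed_at_nf m' i c f u h a])
    _ = tb (tauE i j) := by
        unfold nfF
        rw [Fin.sum_univ_castSucc]
        simp only [Fin.snoc_castSucc, Fin.snoc_last]
        rw [tb_zb, zmod2_cancel]

lemma parB_embed_flip (u : Fin 3 → Bool) (k : Fin 3) :
    parB (embed (FCon m' i c) (hFC m' i c) (gCon m' i c f) u) (jE i k) =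
      tb (u k) + ∑ b : Fin m', tb (f (jE i k) b) := by
  unfold parB
  rw [Fin.sum_univ_succAbove _ (c k)]
  have h1 : embed (FCon m' i c) (hFC m' i c) (gCon m' i c f) u (emb6 m' (jE i k) (c k)) =
      u k := embed_at_phiM m' i c f u k
  rw [h1]
  congr 1
  refine Finset.sum_congr rfl (fun b _ => ?_)
  rw [embed_at_flip m' i c f u k (Fin.succAbove_ne (c k) b), slotF,
    Fin.insertNth_apply_succAbove]

lemma parB_gCon_nf {j : Fin 6} (h : ∀ k, j ≠ jE i k) :
    parB (gCon m' i c f) j = tb (tauE i j) := by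
  unfold parB
  calc ∑ a : Fin (m' + 1), tb (gCon m' i c f (emb6 m' j a))
      = ∑ a : Fin (m' + 1), tb (nfF m' i f j a) := by
        exact Finset.sum_congr rfl (fun a _ => by rw [gCon_nf m' i c f h a])
    _ = tb (tauE i j) := by
        unfold nfF
        rw [Fin.sum_univ_castSucc]
        simp only [Fin.snoc_castSucc, Fin.snoc_last]
        rw [tb_zb, zmod2_cancel]

end Entry

end W10
namespace W10
open CubeDensity

section Entry

variable (m' : ℕ) (i : Fin 120) (c : Fin 3 → Fin (m' + 1)) (f : Fin 6 → Fin m' → Bool)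

/-- the parity corrections coming from the partial flip blocks -/
def rhoB : Fin 3 → Bool := fun k => zb (∑ b : Fin m', tb (f (jE i k) b))

lemma trace_eq (u : Fin 3 → Bool) :
    (fun j => zb (parB (embed (FCon m' i c) (hFC m' i c) (gCon m' i c f) u) j)) =
      Psi (jE i) (tauE i) (autMap 3 1 (rhoB m' i f) u) := by
  funext j
  by_cases h0 : j = jE i 0
  · subst h0
    rw [Psi, if_pos rfl, parB_embed_flip m' i c f u 0, autMap_one_apply]
    rw [show (∑ b : Fin m', tb (f (jE i 0) b)) = tb (rhoB m' i f 0) by rw [rhoB, tb_zb]]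
    exact zb_add_tb _ _
  · by_cases h1 : j = jE i 1
    · subst h1
      rw [Psi, if_neg h0, if_pos rfl, parB_embed_flip m' i c f u 1, autMap_one_apply]
      rw [show (∑ b : Fin m', tb (f (jE i 1) b)) = tb (rhoB m' i f 1) by rw [rhoB, tb_zb]]
      exact zb_add_tb _ _
    · by_cases h2 : j = jE i 2
      · subst h2
        rw [Psi, if_neg h0, if_neg h1, if_pos rfl, parB_embed_flip m' i c f u 2,
          autMap_one_apply]
        rw [show (∑ b : Fin m', tb (f (jE i 2) b)) = tb (rhoB m' i f 2) by rw [rhoB, tb_zb]]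
        exact zb_add_tb _ _
      · rw [Psi, if_neg h0, if_neg h1, if_neg h2,
          parB_embed_nf m' i c f u (fun k => by fin_cases k <;> assumption), zb_tb]

def TE : Set (Fin 3 → Bool) := {u | Psi (jE i) (tauE i) u ∈ A6L}

lemma traceSet_eq :
    {u : Fin 3 → Bool | embed (FCon m' i c) (hFC m' i c) (gCon m' i c f) u ∈ SCon m'} =
      autMap 3 1 (rhoB m' i f) '' TE i := by
  rw [image_autMap_one]
  ext u
  show (fun j => zb (parB _ j)) ∈ A6L ↔ _
  rw [trace_eq m' i c f u]
  exact Iff.rfl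

def sigmaE : Equiv.Perm (Fin 3) :=
  ⟨(ENT i).2.2.1, (ENT i).2.2.2.1, (hInv i).1, (hInv i).2⟩

lemma W10set_mem (u : Fin 3 → Bool) : u ∈ W10set ↔ u ∈ W10L := by
  simp only [W10set, W10L, Set.mem_insert_iff, Set.mem_singleton_iff, List.mem_cons,
    List.mem_singleton, List.not_mem_nil, or_false]

lemma copy_TE : ExactCopy 3 W10set (TE i) := by
  refine ⟨sigmaE i, (ENT i).2.2.2.2, ?_⟩
  ext u
  rw [Set.mem_image]
  have hinv : ⇑(sigmaE i)⁻¹ = (ENT i).2.2.2.1 := rfl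
  constructor
  · rintro ⟨w, hw, rfl⟩
    exact (hCopy i _).1 ⟨w, (W10set_mem w).1 hw, rfl⟩
  · intro hu
    obtain ⟨w, hw, hwu⟩ := (hCopy i u).2 hu
    exact ⟨w, (W10set_mem w).2 hw, hwu⟩

lemma isGood_con :
    IsGood W10set (SCon m') (FCon m' i c) (hFC m' i c) (gCon m' i c f) := by
  unfold IsGood
  rw [traceSet_eq m' i c f]
  exact (copy_TE i).image 1 (rhoB m' i f)

lemma norm_con : ∀ x ∈ FCon m' i c, gCon m' i c f x = false := by
  intro x hx
  obtain ⟨k, rfl⟩ := (mem_FCon m' i c).1 hx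
  exact gCon_phiM m' i c f k

end Entry

/-! ### The injection and the counting -/

def Dom (m' : ℕ) : Type :=
  Fin 120 × (Fin 3 → Fin (m' + 1)) × (Fin 6 → Fin m' → Bool)

instance (m' : ℕ) : Fintype (Dom m') := by unfold Dom; infer_instance

def GoodT (m' : ℕ) : Type :=
  {p : Finset (Fin (6 * (m' + 1))) × (Fin (6 * (m' + 1)) → Bool) //
    ∃ hF : p.1.card = 3, (∀ i ∈ p.1, p.2 i = false) ∧
      IsGood W10set (SCon m') p.1 hF p.2}

def Theta (m' : ℕ) : Dom m' → GoodT m' :=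
  fun q => ⟨(FCon m' q.1 q.2.1, gCon m' q.1 q.2.1 q.2.2),
    ⟨hFC m' q.1 q.2.1, norm_con m' q.1 q.2.1 q.2.2, isGood_con m' q.1 q.2.1 q.2.2⟩⟩

lemma keyOf_strictMono : StrictMono (fun i : Fin 120 => encT (ENT i).1 (ENT i).2.1) := by
  rw [Fin.strictMono_iff_lt_succ]
  exact fun b => hKey b

lemma Theta_injective (m' : ℕ) : Function.Injective (Theta m') := by
  rintro ⟨i, c, f⟩ ⟨i', c', f'⟩ h
  have hval := congrArg Subtype.val h
  have hF : FCon m' i c = FCon m' i' c' := congrArg Prod.fst hval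
  have hg : gCon m' i c f = gCon m' i' c' f' := congrArg Prod.snd hval
  -- step 1: the increasing enumerations agree
  have hphi : phiM m' i c = phiM m' i' c' := by
    have e1 : phiM m' i c = (FCon m' i c).orderEmbOfFin (hFC m' i c) :=
      Finset.orderEmbOfFin_unique (hFC m' i c)
        (fun k => (mem_FCon m' i c).2 ⟨k, rfl⟩) (phiM_mono m' i c)
    have e2 : phiM m' i' c' = (FCon m' i' c').orderEmbOfFin (hFC m' i' c') :=
      Finset.orderEmbOfFin_unique (hFC m' i' c')
        (fun k => (mem_FCon m' i' c').2 ⟨k, rfl⟩) (phiM_mono m' i' c')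
    rw [e1, e2]
    have haux : ∀ (s t : Finset (Fin (6 * (m' + 1)))) (hs : s.card = 3) (ht : t.card = 3),
        s = t → ⇑(s.orderEmbOfFin hs) = ⇑(t.orderEmbOfFin ht) := by
      rintro s t hs ht rfl
      rfl
    exact haux _ _ _ _ hF
  have hjE : jE i = jE i' := by
    funext k
    have := congrArg (fun φ => blk (φ k)) hphi
    simpa [phiM, blk_emb6] using this
  have hc : c = c' := by
    funext k
    have := congrArg (fun φ => posn (φ k)) hphi
    simpa [phiM, posn_emb6] using this
  -- step 2: the tau components agree
  have htau : tauE i = tauE i' := by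
    funext j
    by_cases hj : ∃ k, j = jE i k
    · obtain ⟨k, rfl⟩ := hj
      have t1 : tauE i (jE i k) = false := hTau i k
      have t2 : tauE i' (jE i' k) = false := hTau i' k
      rw [t1, hjE]
      exact t2.symm
    · push_neg at hj
      have hj' : ∀ k, j ≠ jE i' k := by rw [← hjE]; exact hj
      apply tb_inj
      rw [← parB_gCon_nf m' i c f hj, ← parB_gCon_nf m' i' c' f' hj', hg]
  -- step 3: the indices agree
  have hi : i = i' := by
    have : encT (ENT i).1 (ENT i).2.1 = encT (ENT i').1 (ENT i').2.1 := by
      show encT (jE i) (tauE i) = encT (jE i') (tauE i')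
      rw [hjE, htau]
    exact keyOf_strictMono.injective this
  -- step 4: the free bits agree
  have hf : f = f' := by
    funext j b
    by_cases hjf : ∃ k, j = jE i k
    · obtain ⟨k, rfl⟩ := hjf
      have v1 : gCon m' i c f (emb6 m' (jE i k) ((c k).succAbove b)) =
          slotF m' i c f k ((c k).succAbove b) := gCon_flip m' i c f k _
      have v2 : gCon m' i' c' f' (emb6 m' (jE i' k) ((c' k).succAbove b)) =
          slotF m' i' c' f' k ((c' k).succAbove b) := gCon_flip m' i' c' f' k _
      rw [slotF, Fin.insertNth_apply_succAbove] at v1 v2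
      have : gCon m' i c f (emb6 m' (jE i k) ((c k).succAbove b)) =
          gCon m' i' c' f' (emb6 m' (jE i' k) ((c' k).succAbove b)) := by
        rw [hg, hjE, hc]
      rw [v1, v2, ← hjE] at this
      exact this
    · push_neg at hjf
      have hj' : ∀ k, j ≠ jE i' k := by rw [← hjE]; exact hjf
      have v1 : gCon m' i c f (emb6 m' j (Fin.castSucc b)) = nfF m' i f j (Fin.castSucc b) :=
        gCon_nf m' i c f hjf _
      have v2 : gCon m' i' c' f' (emb6 m' j (Fin.castSucc b)) =
          nfF m' i' f' j (Fin.castSucc b) := gCon_nf m' i' c' f' hj' _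
      rw [nfF, Fin.snoc_castSucc] at v1 v2
      rw [← v1, ← v2, hg]
  exact Prod.ext hi (Prod.ext hc hf)

lemma card_Dom (m' : ℕ) : Nat.card (Dom m') = 120 * (m' + 1) ^ 3 * 2 ^ (6 * m') := by
  rw [Nat.card_eq_fintype_card]
  show Fintype.card (Fin 120 × (Fin 3 → Fin (m' + 1)) × (Fin 6 → Fin m' → Bool)) = _
  simp only [Fintype.card_prod, Fintype.card_fun, Fintype.card_fin, Fintype.card_bool]
  rw [← pow_mul, mul_comm m' 6, mul_assoc]

lemma goodCount_ge (m' : ℕ) :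
    120 * (m' + 1) ^ 3 * 2 ^ (6 * m') ≤
      goodCount 3 W10set (6 * (m' + 1)) (SCon m') := by
  rw [← card_Dom m', goodCount]
  exact Nat.card_le_card_of_injective (Theta m') (Theta_injective m')

lemma gFrac_con_ge (m' : ℕ) :
    (5 : ℝ) / 12 ≤ gFrac 3 W10set (6 * (m' + 1)) (SCon m') := by
  have hsub : 6 * (m' + 1) - 3 = 6 * m' + 3 := by omega
  unfold gFrac
  rw [hsub]
  have hC : (0:ℝ) < ((6 * (m' + 1)).choose 3 : ℝ) := by
    have : 0 < (6 * (m' + 1)).choose 3 := Nat.choose_pos (by omega)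
    exact_mod_cast this
  have hD : (0:ℝ) < ((6 * (m' + 1)).choose 3 : ℝ) * 2 ^ (6 * m' + 3) := by positivity
  rw [div_le_div_iff₀ (by norm_num) hD]
  have hgood : (120 * (m' + 1) ^ 3 * 2 ^ (6 * m') : ℝ) ≤
      (goodCount 3 W10set (6 * (m' + 1)) (SCon m') : ℝ) := by
    exact_mod_cast goodCount_ge m'
  have hchoose : (((6 * (m' + 1)).choose 3 : ℕ) : ℝ) ≤ 36 * ((m' : ℝ) + 1) ^ 3 := by
    have h1 := Nat.choose_le_pow_div (α := ℝ) 3 (6 * (m' + 1))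
    have h2 : ((6 * (m' + 1) : ℕ) : ℝ) = 6 * ((m' : ℝ) + 1) := by push_cast; ring
    rw [h2, show ((Nat.factorial 3 : ℕ) : ℝ) = 6 by norm_num [Nat.factorial]] at h1
    refine h1.trans_eq ?_
    ring
  calc (5:ℝ) * (((6 * (m' + 1)).choose 3 : ℝ) * 2 ^ (6 * m' + 3))
      ≤ 5 * ((36 * ((m' : ℝ) + 1) ^ 3) * 2 ^ (6 * m' + 3)) := by
        have h2 : (0:ℝ) < (2:ℝ) ^ (6 * m' + 3) := by positivity
        nlinarith
    _ = (120 * ((m' : ℝ) + 1) ^ 3 * 2 ^ (6 * m')) * 12 := by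
        rw [pow_add]
        ring
    _ ≤ (goodCount 3 W10set (6 * (m' + 1)) (SCon m') : ℝ) * 12 := by
        have : (120 * (m' + 1) ^ 3 * 2 ^ (6 * m') : ℝ) =
            120 * ((m' : ℝ) + 1) ^ 3 * 2 ^ (6 * m') := by push_cast; ring
        nlinarith [hgood]

lemma exD_con_ge (m' : ℕ) :
    (5 : ℝ) / 12 ≤ exD 3 W10set (6 * (m' + 1)) :=
  le_trans (gFrac_con_ge m') (gFrac_le_exD 3 W10set (6 * (m' + 1)) (SCon m'))

end W10
namespace CubeDensity

/-! ### Antitonicity of `exD` -/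

section Antitone

variable {d n : ℕ}

/-- restriction of a set along the hyperplane `x_j = b` -/
def resSet (j : Fin (n + 1)) (b : Bool) (S : Set (Fin (n + 1) → Bool)) :
    Set (Fin n → Bool) := {w | j.insertNth b w ∈ S}

variable {S : Set (Fin (n + 1) → Bool)}

lemma image_preimage_succAbove {F : Finset (Fin (n + 1))} {j : Fin (n + 1)} (hj : j ∉ F) :
    (F.preimage j.succAbove Fin.succAbove_right_injective.injOn).image j.succAbove = F := by
  ext x
  simp only [Finset.mem_image, Finset.mem_preimage]
  constructor
  · rintro ⟨k, hk, rfl⟩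
    exact hk
  · intro hx
    obtain ⟨k, rfl⟩ := Fin.exists_succAbove_eq (show x ≠ j from fun h => hj (h ▸ hx))
    exact ⟨k, hx, rfl⟩

lemma card_preimage_succAbove {F : Finset (Fin (n + 1))} {j : Fin (n + 1)} (hj : j ∉ F)
    (hF : F.card = d) :
    (F.preimage j.succAbove Fin.succAbove_right_injective.injOn).card = d := by
  have h2 := Finset.card_image_of_injective
    (F.preimage j.succAbove Fin.succAbove_right_injective.injOn)
    (Fin.succAbove_right_injective (p := j))
  rw [image_preimage_succAbove hj] at h2
  rw [← h2]
  exact hF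

lemma orderIso_succAbove_transfer {F : Finset (Fin (n + 1))} {j : Fin (n + 1)}
    (hj : j ∉ F) (hF : F.card = d)
    (k : Fin d) :
    ((F.orderIsoOfFin hF) k : Fin (n + 1)) =
      j.succAbove (((F.preimage j.succAbove Fin.succAbove_right_injective.injOn).orderIsoOfFin
        (card_preimage_succAbove hj hF)) k : Fin n) := by
  have hmono : StrictMono (fun k : Fin d =>
      j.succAbove (((F.preimage j.succAbove
        Fin.succAbove_right_injective.injOn).orderIsoOfFin
        (card_preimage_succAbove hj hF)) k : Fin n)) := by
    intro a b hab
    apply Fin.strictMono_succAbove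
    exact ((F.preimage j.succAbove Fin.succAbove_right_injective.injOn).orderIsoOfFin
      (card_preimage_succAbove hj hF)).strictMono hab
  have hmem : ∀ k : Fin d, j.succAbove (((F.preimage j.succAbove
      Fin.succAbove_right_injective.injOn).orderIsoOfFin
      (card_preimage_succAbove hj hF)) k : Fin n) ∈ F := by
    intro k
    have h1 := (((F.preimage j.succAbove Fin.succAbove_right_injective.injOn).orderIsoOfFin
      (card_preimage_succAbove hj hF)) k).2
    rwa [Finset.mem_preimage] at h1
  exact orderIsoOfFin_apply_eq hF hmono hmem k

lemma orderIso_symm_succAbove_transfer {F : Finset (Fin (n + 1))} {j : Fin (n + 1)}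
    (hj : j ∉ F) (hF : F.card = d) {k : Fin n}
    (hk : k ∈ F.preimage j.succAbove Fin.succAbove_right_injective.injOn)
    (hk' : j.succAbove k ∈ F) :
    (F.orderIsoOfFin hF).symm ⟨j.succAbove k, hk'⟩ =
      ((F.preimage j.succAbove Fin.succAbove_right_injective.injOn).orderIsoOfFin
        (card_preimage_succAbove hj hF)).symm ⟨k, hk⟩ := by
  set F' := F.preimage j.succAbove Fin.succAbove_right_injective.injOn
  set k0 := (F'.orderIsoOfFin (card_preimage_succAbove hj hF)).symm ⟨k, hk⟩ with hk0
  have h1 : ((F'.orderIsoOfFin (card_preimage_succAbove hj hF)) k0 : Fin n) = k := by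
    rw [hk0, OrderIso.apply_symm_apply]
  have h2 : (F.orderIsoOfFin hF) k0 = ⟨j.succAbove k, hk'⟩ := by
    apply Subtype.ext
    rw [orderIso_succAbove_transfer hj hF k0, h1]
  rw [← h2, OrderIso.symm_apply_apply]

lemma embed_insertNth {F : Finset (Fin (n + 1))} {j : Fin (n + 1)} (hj : j ∉ F)
    (hF : F.card = d) (g : Fin (n + 1) → Bool) (u : Fin d → Bool) :
    embed F hF g u =
      j.insertNth (g j) (embed (F.preimage j.succAbove Fin.succAbove_right_injective.injOn)
        (card_preimage_succAbove hj hF) (g ∘ j.succAbove) u) := by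
  funext x
  refine Fin.succAboveCases j ?_ ?_ x
  · rw [Fin.insertNth_apply_same, embed, dif_neg hj]
  · intro k
    rw [Fin.insertNth_apply_succAbove]
    by_cases hk : k ∈ F.preimage j.succAbove Fin.succAbove_right_injective.injOn
    · have hk' : j.succAbove k ∈ F := by rwa [Finset.mem_preimage] at hk
      rw [embed, dif_pos hk', embed, dif_pos hk]
      rw [orderIso_symm_succAbove_transfer hj hF hk hk']
    · have hk' : j.succAbove k ∉ F := by rwa [Finset.mem_preimage] at hk
      rw [embed, dif_neg hk', embed, dif_neg hk]
      rfl

lemma isGood_res_iff {H : Set (Fin d → Bool)} {F : Finset (Fin (n + 1))} {j : Fin (n + 1)}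
    (hj : j ∉ F) (hF : F.card = d) (g : Fin (n + 1) → Bool) :
    IsGood H S F hF g ↔
      IsGood H (resSet j (g j) S)
        (F.preimage j.succAbove Fin.succAbove_right_injective.injOn)
        (card_preimage_succAbove hj hF) (g ∘ j.succAbove) := by
  unfold IsGood
  have htr : {u : Fin d → Bool | embed F hF g u ∈ S} =
      {u : Fin d → Bool |
        embed (F.preimage j.succAbove Fin.succAbove_right_injective.injOn)
          (card_preimage_succAbove hj hF) (g ∘ j.succAbove) u ∈ resSet j (g j) S} := by
    ext u
    show embed F hF g u ∈ S ↔ j.insertNth (g j) _ ∈ S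
    rw [← embed_insertNth hj hF g u]
  rw [htr]

end Antitone

end CubeDensity
namespace CubeDensity

section Counting

attribute [local instance] Classical.propDecidable

variable {d n : ℕ} {H : Set (Fin d → Bool)} {S : Set (Fin (n + 1) → Bool)}

/-- property of being a (normalized) good pair -/
def GPprop (d : ℕ) (H : Set (Fin d → Bool)) (n : ℕ) (S : Set (Fin n → Bool))
    (p : Finset (Fin n) × (Fin n → Bool)) : Prop :=
  ∃ hF : p.1.card = d, (∀ i ∈ p.1, p.2 i = false) ∧ IsGood H S p.1 hF p.2

lemma goodCount_eq_card (d : ℕ) (H : Set (Fin d → Bool)) (n : ℕ) (S : Set (Fin n → Bool)) :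
    goodCount d H n S = Nat.card {p // GPprop d H n S p} := rfl

lemma isGood_congr {H : Set (Fin d → Bool)} {S : Set (Fin n → Bool)}
    {F F' : Finset (Fin n)} {g g' : Fin n → Bool} (hFF : F = F') (hgg : g = g')
    (hF : F.card = d) (hF' : F'.card = d) :
    IsGood H S F hF g ↔ IsGood H S F' hF' g' := by
  subst hFF
  subst hgg
  rfl

/-- The map sending a good `d`-subcube of `Q_{n+1}` together with a free coordinate `j`
to the hyperplane `(j, b)` and the induced good `d`-subcube of `Q_n`. -/
noncomputable def PhiMap :
    (Σ p : {p // GPprop d H (n + 1) S p}, {j : Fin (n + 1) // j ∉ p.1.1}) →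
      (Σ jb : Fin (n + 1) × Bool, {q // GPprop d H n (resSet jb.1 jb.2 S) q}) :=
  fun x =>
    ⟨(x.2.1, x.1.1.2 x.2.1),
      ⟨(x.1.1.1.preimage x.2.1.succAbove Fin.succAbove_right_injective.injOn,
        x.1.1.2 ∘ x.2.1.succAbove), by
        obtain ⟨⟨⟨F, g⟩, hp⟩, ⟨j, hj⟩⟩ := x
        obtain ⟨hF, hnorm, hgood⟩ := hp
        refine ⟨card_preimage_succAbove hj hF, ?_, ?_⟩
        · intro k hk
          rw [Finset.mem_preimage] at hk
          exact hnorm _ hk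
        · exact (isGood_res_iff hj hF g).1 hgood⟩⟩

lemma insertNth_self (j : Fin (n + 1)) (g : Fin (n + 1) → Bool) :
    j.insertNth (g j) (g ∘ j.succAbove) = g := by
  funext x
  refine Fin.succAboveCases j ?_ ?_ x
  · rw [Fin.insertNth_apply_same]
  · intro k
    rw [Fin.insertNth_apply_succAbove]
    rfl

lemma PhiMap_injective :
    Function.Injective (PhiMap (d := d) (n := n) (H := H) (S := S)) := by
  rintro ⟨⟨⟨F, g⟩, hp⟩, ⟨j, hj⟩⟩ ⟨⟨⟨F', g'⟩, hp'⟩, ⟨j', hj'⟩⟩ h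
  have hflat := congrArg (fun z : (Σ jb : Fin (n + 1) × Bool,
      {q // GPprop d H n (resSet jb.1 jb.2 S) q}) => (z.1, z.2.1)) h
  simp only [PhiMap] at hflat
  have h1 : ((j, g j) : Fin (n + 1) × Bool) = (j', g' j') := congrArg Prod.fst hflat
  have hv : ((F.preimage j.succAbove Fin.succAbove_right_injective.injOn, g ∘ j.succAbove) :
      Finset (Fin n) × (Fin n → Bool)) =
      (F'.preimage j'.succAbove Fin.succAbove_right_injective.injOn, g' ∘ j'.succAbove) :=
    congrArg Prod.snd hflat
  have hjj : j = j' := congrArg Prod.fst h1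
  subst hjj
  have hb : g j = g' j := congrArg Prod.snd h1
  have hFpre : F.preimage j.succAbove Fin.succAbove_right_injective.injOn =
      F'.preimage j.succAbove Fin.succAbove_right_injective.injOn := congrArg Prod.fst hv
  have hgc : g ∘ j.succAbove = g' ∘ j.succAbove := congrArg Prod.snd hv
  have hFF : F = F' := by
    rw [← image_preimage_succAbove (F := F) hj, ← image_preimage_succAbove (F := F') hj',
      hFpre]
  have hgg : g = g' := by
    rw [← insertNth_self j g, ← insertNth_self j g', hb, hgc]
  subst hFF
  subst hgg
  rfl

lemma card_sigma_left :
    Nat.card (Σ p : {p // GPprop d H (n + 1) S p}, {j : Fin (n + 1) // j ∉ p.1.1}) =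
      goodCount d H (n + 1) S * (n + 1 - d) := by
  rw [Nat.card_eq_fintype_card, Fintype.card_sigma]
  have hfib : ∀ p : {p // GPprop d H (n + 1) S p},
      Fintype.card {j : Fin (n + 1) // j ∉ p.1.1} = n + 1 - d := by
    intro p
    obtain ⟨hF, -, -⟩ := p.2
    have h1 : Fintype.card {j : Fin (n + 1) // j ∉ p.1.1} = (p.1.1ᶜ).card :=
      Fintype.card_of_subtype _ (fun x => Finset.mem_compl)
    rw [h1, Finset.card_compl, Fintype.card_fin, hF]
  rw [Finset.sum_congr rfl (fun p _ => hfib p), Finset.sum_const, Finset.card_univ,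
    smul_eq_mul, goodCount_eq_card, Nat.card_eq_fintype_card]

lemma card_sigma_right :
    Nat.card (Σ jb : Fin (n + 1) × Bool, {q // GPprop d H n (resSet jb.1 jb.2 S) q}) =
      ∑ jb : Fin (n + 1) × Bool, goodCount d H n (resSet jb.1 jb.2 S) := by
  rw [Nat.card_eq_fintype_card, Fintype.card_sigma]
  refine Finset.sum_congr rfl (fun jb _ => ?_)
  rw [goodCount_eq_card, Nat.card_eq_fintype_card]

lemma count_le :
    goodCount d H (n + 1) S * (n + 1 - d) ≤
      ∑ jb : Fin (n + 1) × Bool, goodCount d H n (resSet jb.1 jb.2 S) := by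
  rw [← card_sigma_left, ← card_sigma_right]
  exact Nat.card_le_card_of_injective _ (PhiMap_injective (d := d) (n := n) (H := H) (S := S))

end Counting

section AntitoneSec

variable {d n : ℕ}

lemma choose_identity (hd : d ≤ n) :
    (n + 1 - d) * (n + 1).choose d = (n + 1) * n.choose d := by
  have h1 := Nat.choose_succ_right_eq (n + 1) d
  have h2 := Nat.add_one_mul_choose_eq n d
  rw [mul_comm, ← h1, ← h2]

lemma exD_succ_le (H : Set (Fin d → Bool)) (hd : d ≤ n) :
    exD d H (n + 1) ≤ exD d H n := by
  apply ciSup_le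
  intro S
  have hCn : 0 < n.choose d := Nat.choose_pos hd
  have hCn1 : 0 < (n + 1).choose d := Nat.choose_pos (le_trans hd (Nat.le_succ n))
  have hdenN : (0:ℝ) < (n.choose d : ℝ) * 2 ^ (n - d) := by positivity
  have hdenN1 : (0:ℝ) < ((n + 1).choose d : ℝ) * 2 ^ (n + 1 - d) := by positivity
  have hsub1 : n + 1 - d = (n - d) + 1 := by omega
  -- each restricted count is bounded
  have hres : ∀ jb : Fin (n + 1) × Bool,
      (goodCount d H n (resSet jb.1 jb.2 S) : ℝ) ≤
        exD d H n * ((n.choose d : ℝ) * 2 ^ (n - d)) := by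
    intro jb
    have h1 : gFrac d H n (resSet jb.1 jb.2 S) ≤ exD d H n := gFrac_le_exD _ _ _ _
    rw [gFrac, div_le_iff₀ hdenN] at h1
    exact h1
  have hcount := count_le (d := d) (n := n) (H := H) (S := S)
  have hcountR : (goodCount d H (n + 1) S : ℝ) * ((n + 1 - d : ℕ) : ℝ) ≤
      ∑ jb : Fin (n + 1) × Bool, (goodCount d H n (resSet jb.1 jb.2 S) : ℝ) := by
    rw [← Nat.cast_mul, ← Nat.cast_sum]
    exact_mod_cast hcount
  have hsumR : ∑ jb : Fin (n + 1) × Bool, (goodCount d H n (resSet jb.1 jb.2 S) : ℝ) ≤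
      (2 * (n + 1 : ℝ)) * (exD d H n * ((n.choose d : ℝ) * 2 ^ (n - d))) := by
    calc ∑ jb : Fin (n + 1) × Bool, (goodCount d H n (resSet jb.1 jb.2 S) : ℝ)
        ≤ ∑ _jb : Fin (n + 1) × Bool, exD d H n * ((n.choose d : ℝ) * 2 ^ (n - d)) :=
          Finset.sum_le_sum (fun jb _ => hres jb)
      _ = (Fintype.card (Fin (n + 1) × Bool) : ℝ) *
            (exD d H n * ((n.choose d : ℝ) * 2 ^ (n - d))) := by
          rw [Finset.sum_const, Finset.card_univ, nsmul_eq_mul]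
      _ = (2 * (n + 1 : ℝ)) * (exD d H n * ((n.choose d : ℝ) * 2 ^ (n - d))) := by
          rw [Fintype.card_prod, Fintype.card_fin, Fintype.card_bool]
          push_cast
          ring
  -- the key denominator identity
  have hiden : ((n + 1 - d : ℕ) : ℝ) * (((n + 1).choose d : ℝ) * 2 ^ (n + 1 - d)) =
      (2 * (n + 1 : ℝ)) * ((n.choose d : ℝ) * 2 ^ (n - d)) := by
    have h1 := choose_identity hd
    have h2 : ((n + 1 - d : ℕ) : ℝ) * ((n + 1).choose d : ℝ) =
        ((n + 1 : ℕ) : ℝ) * (n.choose d : ℝ) := by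
      rw [← Nat.cast_mul, ← Nat.cast_mul, h1]
    rw [hsub1, pow_succ]
    calc ((n - d + 1 : ℕ) : ℝ) * (((n + 1).choose d : ℝ) * (2 ^ (n - d) * 2))
        = (((n - d + 1 : ℕ) : ℝ) * ((n + 1).choose d : ℝ)) * (2 ^ (n - d) * 2) := by ring
      _ = (((n + 1 : ℕ) : ℝ) * (n.choose d : ℝ)) * (2 ^ (n - d) * 2) := by
          rw [show ((n - d + 1 : ℕ) : ℝ) = ((n + 1 - d : ℕ) : ℝ) by rw [← hsub1], h2]
      _ = (2 * (n + 1 : ℝ)) * ((n.choose d : ℝ) * 2 ^ (n - d)) := by push_cast; ring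
  -- conclude
  rw [gFrac, div_le_iff₀ hdenN1]
  have hpos : (0:ℝ) < ((n + 1 - d : ℕ) : ℝ) := by
    have : 0 < n + 1 - d := by omega
    exact_mod_cast this
  rw [← mul_le_mul_iff_of_pos_right hpos]
  calc (goodCount d H (n + 1) S : ℝ) * ((n + 1 - d : ℕ) : ℝ)
      ≤ (2 * (n + 1 : ℝ)) * (exD d H n * ((n.choose d : ℝ) * 2 ^ (n - d))) := by
        refine le_trans ?_ hsumR
        exact_mod_cast hcountR
    _ = exD d H n * (((n + 1 - d : ℕ) : ℝ) * (((n + 1).choose d : ℝ) * 2 ^ (n + 1 - d))) := by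
        rw [hiden]; ring
    _ = exD d H n * (((n + 1).choose d : ℝ) * 2 ^ (n + 1 - d)) * ((n + 1 - d : ℕ) : ℝ) := by
        ring

end AntitoneSec

end CubeDensity


open CubeDensity in
/-- λ(W₁₀, 3) ≥ 5/12, where W₁₀ = {(0,0,0),(0,0,1),(1,1,1)} in Q₃. -/
theorem dCubeDensity_W10_ge :
    ∃ L : ℝ,
      Filter.Tendsto
        (fun n => CubeDensity.exD 3
          ({![false, false, false], ![false, false, true],
            ![true, true, true]} : Set (Fin 3 → Bool)) n)
        Filter.atTop (nhds L) ∧ 5 / 12 ≤ L := by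
  have fant : Antitone (fun k : ℕ => exD 3 W10.W10set (k + 3)) := by
    apply antitone_nat_of_succ_le
    intro k
    have h := exD_succ_le (d := 3) (n := k + 3) W10.W10set (by omega)
    exact h
  have fbdd : BddBelow (Set.range (fun k : ℕ => exD 3 W10.W10set (k + 3))) := by
    refine ⟨0, ?_⟩
    rintro x ⟨k, rfl⟩
    exact exD_nonneg _ _ _
  refine ⟨⨅ k : ℕ, exD 3 W10.W10set (k + 3), ?_, ?_⟩
  · have hlim := tendsto_atTop_ciInf fant fbdd
    exact (Filter.tendsto_add_atTop_iff_nat 3).mp hlim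
  · apply le_ciInf
    intro k
    have h1 : exD 3 W10.W10set ((6 * k + 15) + 3) ≤
        exD 3 W10.W10set (k + 3) := fant (by omega)
    have h2 : (5:ℝ)/12 ≤ exD 3 W10.W10set ((6 * k + 15) + 3) := by
      have h3 := W10.exD_con_ge (k + 2)
      have he : 6 * ((k + 2) + 1) = (6 * k + 15) + 3 := by ring
      rwa [he] at h3
    exact le_trans h2 h1
end
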